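/- Let V be a finitistic representation of Ã_ℝ. Then there exist a finite partition 𝒫 of S¹ with |𝒫| ≥ 2 into path-connected parts and a representative point x_P ∈ P for each P ∈ 𝒫 such that: (a) whenever g_{x,y} is a generating morphism with x and y in the same part P, the map V(x,y) is an isomorphism; and (b) the refinement U of V — the representation defined by U(x) = V(x_P) for x ∈ P and U(x,y) = V(x_P, x_{P'}) for x ∈ P, y ∈ P' — is isomorphic to V. -/

import Mathlib

open Set

noncomputable section

/-- A continuous quiver of type Ã: the data of the (even) set `S` of sinks/sources
on the circle, described via the cardinality `2*m`-ish data `m` and the angles `α`.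
When `m = 0` we are in the cyclic case and fix `α j = π j`. -/
structure AtR where
  m : ℕ
  α : ℤ → ℝ
  mono : StrictMono α
  cyc : m = 0 → ∀ j : ℤ, α j = Real.pi * j
  per : m ≠ 0 → ∀ j : ℤ, α (j + 2 * m) = α j + 2 * Real.pi
  base0 : 0 ≤ α 0
  base1 : α 0 < 2 * Real.pi

namespace AtR

variable (Q : AtR)

/-- `covRel θ φ` holds iff there is a morphism `e^{iθ} → e^{iφ}` in the continuous
quiver of type Ã, presented on the universal cover `ℝ` of the circle.
In the cyclic case (`m = 0`) morphisms go counterclockwise, i.e. `θ ≤ φ`;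
otherwise a morphism stays within one (lifted) arc `[α j, α (j+1)]` and goes
down on even arcs (towards the sink `α j`) and up on odd arcs. -/
def covRel (θ φ : ℝ) : Prop :=
  if Q.m = 0 then θ ≤ φ
  else ∃ j : ℤ, θ ∈ Set.Icc (Q.α j) (Q.α (j + 1)) ∧ φ ∈ Set.Icc (Q.α j) (Q.α (j + 1)) ∧
    ((Even j ∧ φ ≤ θ) ∨ (¬ Even j ∧ θ ≤ φ))

variable {Q}

lemma arcs_overlap {j j' : ℤ} {x : ℝ}
    (hj : x ∈ Set.Icc (Q.α j) (Q.α (j + 1))) (hj' : x ∈ Set.Icc (Q.α j') (Q.α (j' + 1)))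
    (hne : j ≠ j') :
    (j' = j + 1 ∧ x = Q.α (j + 1)) ∨ (j = j' + 1 ∧ x = Q.α j) := by
  rcases lt_or_gt_of_ne hne with h | h
  · left
    have h1 : j + 1 ≤ j' := by omega
    have h2 : Q.α (j + 1) ≤ Q.α j' := Q.mono.monotone h1
    have hx : x = Q.α (j + 1) := le_antisymm hj.2 (le_trans h2 hj'.1)
    have hx2 : Q.α (j + 1) = Q.α j' := le_antisymm h2 (hx ▸ hj'.1)
    exact ⟨(Q.mono.injective hx2).symm, hx⟩
  · right
    have h1 : j' + 1 ≤ j := by omega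
    have h2 : Q.α (j' + 1) ≤ Q.α j := Q.mono.monotone h1
    have hx : x = Q.α (j' + 1) := le_antisymm hj'.2 (le_trans h2 hj.1)
    have hx2 : Q.α (j' + 1) = Q.α j := le_antisymm h2 (hx ▸ hj.1)
    exact ⟨Q.mono.injective hx2.symm, hx.trans hx2⟩

/-- Key lemma: if there are morphisms `θ → φ` and `φ → ψ` then `φ` lies in the
convex hull of `{θ, ψ}`. -/
lemma covRel_hull {θ φ ψ : ℝ} (h1 : Q.covRel θ φ) (h2 : Q.covRel φ ψ) :
    min θ ψ ≤ φ ∧ φ ≤ max θ ψ := by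
  unfold covRel at h1 h2
  by_cases hm : Q.m = 0
  · rw [if_pos hm] at h1 h2
    exact ⟨le_trans (min_le_left _ _) h1, le_trans h2 (le_max_right _ _)⟩
  · rw [if_neg hm] at h1 h2
    obtain ⟨j, hθ, hφ, hp⟩ := h1
    obtain ⟨j2, hφ2, hψ, hp2⟩ := h2
    by_cases hjj : j = j2
    · subst hjj
      rcases hp with ⟨he, hle⟩ | ⟨ho, hle⟩ <;> rcases hp2 with ⟨he2, hle2⟩ | ⟨ho2, hle2⟩
      · exact ⟨le_trans (min_le_right _ _) hle2, le_trans hle (le_max_left _ _)⟩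
      · exact absurd he ho2
      · exact absurd he2 ho
      · exact ⟨le_trans (min_le_left _ _) hle, le_trans hle2 (le_max_right _ _)⟩
    · rcases arcs_overlap hφ hφ2 hjj with ⟨hj2, hφe⟩ | ⟨hj2, hφe⟩
      · -- j2 = j + 1, φ = α (j+1)
        rcases hp with ⟨he, hle⟩ | ⟨ho, hle⟩
        · -- Even j, φ ≤ θ and θ ≤ α (j+1) = φ so θ = φ
          have hθφ : θ = φ := le_antisymm (hφe ▸ hθ.2) hle
          rw [← hθφ]
          exact ⟨min_le_left _ _, le_max_left _ _⟩
        · -- Odd j so j2 = j+1 is even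
          have he2 : Even j2 := by
            rw [hj2]; rcases Int.even_or_odd j with h | h
            · exact absurd h ho
            · exact h.add_one
          rcases hp2 with ⟨_, hle2⟩ | ⟨ho2, _⟩
          · -- ψ ≤ φ, but φ = α j2 is the bottom of the arc of j2, so ψ = φ
            have hψφ : ψ = φ := by
              have : Q.α j2 ≤ ψ := hψ.1
              have hb : φ = Q.α j2 := by rw [hj2]; exact hφe
              linarith [hb ▸ this]
            rw [← hψφ]
            exact ⟨min_le_right _ _, le_max_right _ _⟩
          · exact absurd he2 ho2
      · -- j = j2 + 1, φ = α j
        rcases hp2 with ⟨he2, hle2⟩ | ⟨ho2, hle2⟩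
        · -- Even j2, ψ ≤ φ; φ = α j = α (j2+1) is the top of arc j2... and j odd
          have ho : ¬ Even j := by
            rw [hj2]; intro h
            exact (Int.even_add_one.mp h) he2
          rcases hp with ⟨he', _⟩ | ⟨_, hle⟩
          · exact absurd he' ho
          · -- θ ≤ φ, φ = α j is bottom of arc j, so θ = φ
            have hθφ : θ = φ := le_antisymm hle (hφe ▸ hθ.1)
            rw [← hθφ]
            exact ⟨min_le_left _ _, le_max_left _ _⟩
        · -- Odd j2, φ ≤ ψ; φ = α (j2+1) top of arc j2 so ψ = φ
          have hψφ : ψ = φ := by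
            have hup : ψ ≤ Q.α (j2 + 1) := hψ.2
            have hb : φ = Q.α (j2 + 1) := by rw [← hj2]; exact hφe
            linarith [hb ▸ hup]
          rw [← hψφ]
          exact ⟨min_le_right _ _, le_max_right _ _⟩

lemma covRel_up (j : ℤ) (h : Q.m = 0 ∨ ¬ Even j) : Q.covRel (Q.α j) (Q.α (j + 1)) := by
  unfold covRel
  split_ifs with hm
  · exact Q.mono.monotone (by omega)
  · rcases h with h0 | hodd
    · exact absurd h0 hm
    · exact ⟨j, ⟨le_rfl, Q.mono.monotone (by omega)⟩,
        ⟨Q.mono.monotone (by omega), le_rfl⟩,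
        Or.inr ⟨hodd, Q.mono.monotone (by omega)⟩⟩

lemma covRel_down (j : ℤ) (hm : Q.m ≠ 0) (he : Even j) :
    Q.covRel (Q.α (j + 1)) (Q.α j) := by
  unfold covRel
  rw [if_neg hm]
  exact ⟨j, ⟨Q.mono.monotone (by omega), le_rfl⟩, ⟨le_rfl, Q.mono.monotone (by omega)⟩,
    Or.inl ⟨he, Q.mono.monotone (by omega)⟩⟩

variable (Q)

/-- The number of arcs used to travel once around the circle. -/
def periodN : ℕ := if Q.m = 0 then 2 else 2 * Q.m

lemma periodN_pos : 0 < Q.periodN := by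
  unfold periodN; split_ifs <;> omega

lemma α_periodN : Q.α (Q.periodN : ℤ) = Q.α 0 + 2 * Real.pi := by
  unfold periodN
  split_ifs with hm
  · have h2 : ((2:ℕ):ℤ) = 2 := by norm_cast
    rw [h2, Q.cyc hm 2, Q.cyc hm 0]
    push_cast; ring
  · have := Q.per hm 0
    rw [zero_add] at this
    rw [← this]
    norm_cast

end AtR
/-- A representation (i.e. an `S¹` persistence module) of the continuous quiver of
type Ã, presented equivariantly on the universal cover: vector spaces `obj θ`,
linear maps along every morphism of the quiver (encoded by `covRel`), and a
periodicity isomorphism `per` identifying `obj (θ + 2π)` with `obj θ`,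
compatibly with the maps. -/
structure SRep (k : Type) [Field k] (Q : AtR) where
  obj : ℝ → Type
  [instAdd : ∀ θ, AddCommGroup (obj θ)]
  [instMod : ∀ θ, Module k (obj θ)]
  map : ∀ {θ φ : ℝ}, Q.covRel θ φ → (obj θ →ₗ[k] obj φ)
  map_id : ∀ (θ : ℝ) (h : Q.covRel θ θ), map h = LinearMap.id
  map_comp : ∀ {θ φ ψ : ℝ} (h1 : Q.covRel θ φ) (h2 : Q.covRel φ ψ) (h3 : Q.covRel θ ψ),
      map h3 = (map h2).comp (map h1)
  per : ∀ θ : ℝ, obj (θ + 2 * Real.pi) ≃ₗ[k] obj θ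
  per_map : ∀ {θ φ : ℝ} (h : Q.covRel θ φ) (h' : Q.covRel (θ + 2 * Real.pi) (φ + 2 * Real.pi)),
      (map h).comp (per θ).toLinearMap = ((per φ).toLinearMap).comp (map h')

attribute [instance] SRep.instAdd SRep.instMod

namespace SRep

variable {k : Type} [Field k] {Q : AtR}

lemma per_map_apply (V : SRep k Q) {θ φ : ℝ} (h : Q.covRel θ φ)
    (h' : Q.covRel (θ + 2 * Real.pi) (φ + 2 * Real.pi)) (x : V.obj (θ + 2 * Real.pi)) :
    V.map h (V.per θ x) = V.per φ (V.map h' x) :=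
  LinearMap.congr_fun (V.per_map h h') x

/-- Transport along an equality of points of the cover. -/
def castO (V : SRep k Q) {a b : ℝ} (h : a = b) : V.obj a ≃ₗ[k] V.obj b :=
  h ▸ LinearEquiv.refl k (V.obj a)

/-- A family of linear maps is a morphism of representations if it is natural with
respect to all the structure maps and the periodicity isomorphisms. -/
def IsHomFam (V W : SRep k Q) (f : ∀ θ, V.obj θ →ₗ[k] W.obj θ) : Prop :=
  (∀ {θ φ : ℝ} (h : Q.covRel θ φ) (v : V.obj θ), f φ (V.map h v) = W.map h (f θ v)) ∧
  (∀ (θ : ℝ) (v : V.obj (θ + 2 * Real.pi)), f θ (V.per θ v) = W.per θ (f (θ + 2 * Real.pi) v))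

/-- Two representations are isomorphic if there is a family of linear isomorphisms
natural with respect to the structure maps and the periodicity isomorphisms. -/
def RepIso (V W : SRep k Q) : Prop :=
  ∃ e : ∀ θ, V.obj θ ≃ₗ[k] W.obj θ,
    (∀ {θ φ : ℝ} (h : Q.covRel θ φ) (v : V.obj θ), e φ (V.map h v) = W.map h (e θ v)) ∧
    (∀ (θ : ℝ) (v : V.obj (θ + 2 * Real.pi)), e θ (V.per θ v) = W.per θ (e (θ + 2 * Real.pi) v))

/-- `U` is a (direct) summand of `V`. -/
def SummandOf (U V : SRep k Q) : Prop :=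
  ∃ (f : ∀ θ, U.obj θ →ₗ[k] V.obj θ) (g : ∀ θ, V.obj θ →ₗ[k] U.obj θ),
    IsHomFam U V f ∧ IsHomFam V U g ∧ ∀ (θ : ℝ) (u : U.obj θ), g θ (f θ u) = u

/-- A representation is nonzero if some of its spaces is nonzero. -/
def Nonzero (V : SRep k Q) : Prop := ∃ (θ : ℝ) (v : V.obj θ), v ≠ 0

/-- Pointwise finite-dimensional. -/
def Pwf (V : SRep k Q) : Prop := ∀ θ, FiniteDimensional k (V.obj θ)

/-- Binary direct sum of representations. -/
def prod (V W : SRep k Q) : SRep k Q where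
  obj θ := V.obj θ × W.obj θ
  map h := (V.map h).prodMap (W.map h)
  map_id θ h := by
    rw [V.map_id θ h, W.map_id θ h]; exact LinearMap.prodMap_id
  map_comp h1 h2 h3 := by
    rw [V.map_comp h1 h2 h3, W.map_comp h1 h2 h3]
    exact (LinearMap.prodMap_comp _ _ _ _).symm
  per θ := (V.per θ).prodCongr (W.per θ)
  per_map h h' := by
    apply LinearMap.ext
    rintro ⟨a, b⟩
    simp only [LinearMap.comp_apply, LinearEquiv.coe_coe, LinearMap.prodMap_apply,
      LinearEquiv.prodCongr_apply]
    exact Prod.ext (V.per_map_apply h h' a) (W.per_map_apply h h' b)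

/-- Arbitrary direct sums of representations. -/
def dsum {B : Type} (A : B → SRep k Q) : SRep k Q where
  obj θ := Π₀ b, (A b).obj θ
  map h := DFinsupp.mapRange.linearMap fun b => (A b).map h
  map_id θ h := by
    have : (fun b => (A b).map h) = fun b => (LinearMap.id : (A b).obj θ →ₗ[k] _) := by
      funext b; exact (A b).map_id θ h
    rw [this]; exact DFinsupp.mapRange.linearMap_id
  map_comp h1 h2 h3 := by
    have : (fun b => (A b).map h3) = fun b => ((A b).map h2).comp ((A b).map h1) := by
      funext b; exact (A b).map_comp h1 h2 h3
    rw [this]; exact DFinsupp.mapRange.linearMap_comp _ _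
  per θ := DFinsupp.mapRange.linearEquiv fun b => (A b).per θ
  per_map h h' := by
    apply LinearMap.ext
    intro x
    ext b
    simp only [LinearMap.comp_apply, LinearEquiv.coe_coe,
      DFinsupp.mapRange.linearEquiv_apply, DFinsupp.mapRange.linearMap_apply,
      DFinsupp.mapRange_apply]
    exact (A b).per_map_apply h h' (x b)

/-- Indecomposability. -/
def Indecomposable (V : SRep k Q) : Prop :=
  V.Nonzero ∧ ∀ A B : SRep k Q, A.Nonzero → B.Nonzero → ¬ RepIso V (A.prod B)

end SRep
/-! ## Bars -/

/-- The basis of the bar `M_I` at the point `e^{iθ}`: the set `ξ⁻¹(e^{iθ}) ∩ I`. -/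
def barIdx (I : Set ℝ) (θ : ℝ) : Type :=
  {β : ℝ // β ∈ I ∧ ∃ n : ℤ, β = θ + 2 * Real.pi * n}

/-- The canonical identification of the bars' bases over `θ + 2π` and `θ`. -/
def barShift (I : Set ℝ) (θ : ℝ) : barIdx I (θ + 2 * Real.pi) ≃ barIdx I θ where
  toFun b := ⟨b.1, b.2.1, by
    obtain ⟨n, hn⟩ := b.2.2
    exact ⟨n + 1, by push_cast; linarith⟩⟩
  invFun b := ⟨b.1, b.2.1, by
    obtain ⟨n, hn⟩ := b.2.2
    exact ⟨n - 1, by push_cast; linarith⟩⟩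
  left_inv b := by apply Subtype.ext; rfl
  right_inv b := by apply Subtype.ext; rfl

variable (k : Type) [Field k]

/-- The structure map of the bar `M_I` along a morphism `θ → φ`:
a basis vector `b_β` is sent to `b_{β - θ + φ}` when `β - θ + φ ∈ I` and to `0`
otherwise. -/
def barMapHom (I : Set ℝ) (θ φ : ℝ) :
    (barIdx I θ →₀ k) →ₗ[k] (barIdx I φ →₀ k) := by
  classical
  exact Finsupp.linearCombination k (fun β : barIdx I θ =>
    if h : β.1 - θ + φ ∈ I then
      Finsupp.single (⟨β.1 - θ + φ, h, by
        obtain ⟨n, hn⟩ := β.2.2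
        exact ⟨n, by rw [hn]; ring⟩⟩ : barIdx I φ) (1 : k)
    else 0)

variable {k}

namespace SRep

variable {Q : AtR}

/-- `V` is (isomorphic to) the bar `M_I` on the bounded interval `I ⊂ ℝ`. -/
def BarOn (I : Set ℝ) (V : SRep k Q) : Prop :=
  I.Nonempty ∧ Bornology.IsBounded I ∧ I.OrdConnected ∧
  ∃ e : ∀ θ, V.obj θ ≃ₗ[k] (barIdx I θ →₀ k),
    (∀ {θ φ : ℝ} (h : Q.covRel θ φ) (v : V.obj θ),
        e φ (V.map h v) = barMapHom k I θ φ (e θ v)) ∧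
    (∀ (θ : ℝ) (v : V.obj (θ + 2 * Real.pi)),
        e θ (V.per θ v) = Finsupp.equivMapDomain (barShift I θ) (e (θ + 2 * Real.pi) v))

/-- `V` is a bar. -/
def IsBar (V : SRep k Q) : Prop := ∃ I : Set ℝ, BarOn I V

end SRep
/-! ## Jordan cells -/

namespace SRep

variable {k : Type} [Field k] {Q : AtR}

/-- One step of the monodromy: the isomorphism `V(α j) ≃ V(α (j+1))` obtained
from the structure map along the arc (or its inverse, depending on the
orientation of the arc). -/
def step (V : SRep k Q)
    (hiso : ∀ ⦃θ φ : ℝ⦄ (h : Q.covRel θ φ), Function.Bijective (V.map h)) (j : ℤ) :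
    V.obj (Q.α j) ≃ₗ[k] V.obj (Q.α (j + 1)) :=
  if h : Q.m = 0 ∨ ¬ Even j then
    LinearEquiv.ofBijective _ (hiso (AtR.covRel_up j h))
  else
    (LinearEquiv.ofBijective _ (hiso (AtR.covRel_down j
      (by push_neg at h; exact h.1) (by push_neg at h; exact h.2)))).symm

/-- The zig-zag isomorphism from `V(α 0)` to `V(α n)`. -/
def zig (V : SRep k Q)
    (hiso : ∀ ⦃θ φ : ℝ⦄ (h : Q.covRel θ φ), Function.Bijective (V.map h)) :
    (n : ℕ) → (V.obj (Q.α 0) ≃ₗ[k] V.obj (Q.α (n : ℤ)))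
  | 0 => V.castO (congrArg Q.α (by norm_num))
  | (n + 1) => ((V.zig hiso n).trans (V.step hiso (n : ℤ))).trans
      (V.castO (congrArg Q.α (by push_cast; ring)))

/-- The monodromy automorphism `V̂` of `V(α 0)`: travel once counterclockwise
around the circle (via `zig`) and come back via the periodicity isomorphism. -/
def monodromy (V : SRep k Q)
    (hiso : ∀ ⦃θ φ : ℝ⦄ (h : Q.covRel θ φ), Function.Bijective (V.map h)) :
    V.obj (Q.α 0) ≃ₗ[k] V.obj (Q.α 0) :=
  ((V.zig hiso Q.periodN).trans (V.castO Q.α_periodN)).trans (V.per (Q.α 0))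

/-- `V` is a Jordan cell: its spaces have a constant finite dimension `d ≥ 1`,
all its structure maps are isomorphisms, and `V(α 0)` admits no direct sum
decomposition into two nonzero subspaces invariant under the monodromy. -/
structure IsJordanCell (V : SRep k Q) : Prop where
  bij : ∀ ⦃θ φ : ℝ⦄ (h : Q.covRel θ φ), Function.Bijective (V.map h)
  dim : ∃ d : ℕ, 1 ≤ d ∧ ∀ θ, Module.finrank k (V.obj θ) = d
  indec : ∀ U W : Submodule k (V.obj (Q.α 0)), IsCompl U W →
      (∀ u ∈ U, V.monodromy bij u ∈ U) → (∀ w ∈ W, V.monodromy bij w ∈ W) →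
      U = ⊥ ∨ W = ⊥

end SRep
/-! ## Restriction -/

/-- The periodization of a subset of `ℝ`: the full preimage under `ξ` of its image
in the circle. -/
def periodize (s : Set ℝ) : Set ℝ := {θ | ∃ n : ℤ, θ + 2 * Real.pi * n ∈ s}

lemma periodize_shift (s : Set ℝ) (θ : ℝ) :
    θ ∈ periodize s ↔ θ + 2 * Real.pi ∈ periodize s := by
  constructor
  · rintro ⟨n, hn⟩
    refine ⟨n - 1, ?_⟩
    push_cast
    rw [show θ + 2 * Real.pi + 2 * Real.pi * ((n : ℝ) - 1) = θ + 2 * Real.pi * (n : ℝ) from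
      by ring]
    exact hn
  · rintro ⟨n, hn⟩
    refine ⟨n + 1, ?_⟩
    push_cast
    rw [show θ + 2 * Real.pi * ((n : ℝ) + 1) = θ + 2 * Real.pi + 2 * Real.pi * (n : ℝ) from
      by ring]
    exact hn

namespace SRep

open Classical

variable {k : Type} [Field k] {Q : AtR}

/-- The restriction `V|_A` of a representation to a (2π-periodic) subset `A ⊂ ℝ`
corresponding to a subset of the circle.  Its space at `θ ∈ A` is `V(θ)` and `0`
elsewhere; its structure map along a morphism `θ → φ` is `V(θ,φ)` when every
point through which the morphism factors lies in `A` (the set of such points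
being the interval `[min θ φ, max θ φ]`), and `0` otherwise. -/
def restrict (V : SRep k Q) (A : Set ℝ) (hA : ∀ θ, θ ∈ A ↔ θ + 2 * Real.pi ∈ A) :
    SRep k Q where
  obj θ := PLift (θ ∈ A) → V.obj θ
  map {θ φ} h :=
    { toFun := fun F _ =>
        if c : Set.Icc (min θ φ) (max θ φ) ⊆ A then
          V.map h (F ⟨c ⟨min_le_left θ φ, le_max_left θ φ⟩⟩) else 0
      map_add' := by
        intro F G; funext hφ
        by_cases c : Set.Icc (min θ φ) (max θ φ) ⊆ A <;> simp [c]
      map_smul' := by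
        intro a F; funext hφ
        by_cases c : Set.Icc (min θ φ) (max θ φ) ⊆ A <;> simp [c] }
  map_id θ h := by
    apply LinearMap.ext; intro F; funext hφ
    have c : Set.Icc (min θ θ) (max θ θ) ⊆ A := by
      rw [min_self, max_self, Set.Icc_self]
      exact Set.singleton_subset_iff.mpr hφ.down
    simp only [LinearMap.coe_mk, AddHom.coe_mk, LinearMap.id_coe, id_eq]
    rw [dif_pos c, V.map_id θ h]
    rfl
  map_comp {θ φ ψ} h1 h2 h3 := by
    apply LinearMap.ext; intro F; funext hψ
    have hkey := AtR.covRel_hull h1 h2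
    have s1 : Set.Icc (min θ φ) (max θ φ) ⊆ Set.Icc (min θ ψ) (max θ ψ) :=
      Set.Icc_subset_Icc (le_min (min_le_left θ ψ) hkey.1) (max_le (le_max_left θ ψ) hkey.2)
    have s2 : Set.Icc (min φ ψ) (max φ ψ) ⊆ Set.Icc (min θ ψ) (max θ ψ) :=
      Set.Icc_subset_Icc (le_min hkey.1 (min_le_right θ ψ)) (max_le hkey.2 (le_max_right θ ψ))
    by_cases c1 : Set.Icc (min θ φ) (max θ φ) ⊆ A
    · by_cases c2 : Set.Icc (min φ ψ) (max φ ψ) ⊆ A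
      · have c3 : Set.Icc (min θ ψ) (max θ ψ) ⊆ A := by
          intro z hz
          rcases le_total θ ψ with hθψ | hθψ
          · rw [min_eq_left hθψ, max_eq_right hθψ] at hz
            rcases le_total z φ with hzφ | hzφ
            · exact c1 ⟨le_trans (min_le_left θ φ) hz.1, le_trans hzφ (le_max_right θ φ)⟩
            · exact c2 ⟨le_trans (min_le_left φ ψ) hzφ, le_trans hz.2 (le_max_right φ ψ)⟩
          · rw [min_eq_right hθψ, max_eq_left hθψ] at hz
            rcases le_total z φ with hzφ | hzφ
            · exact c2 ⟨le_trans (min_le_right φ ψ) hz.1, le_trans hzφ (le_max_left φ ψ)⟩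
            · exact c1 ⟨le_trans (min_le_right θ φ) hzφ, le_trans hz.2 (le_max_left θ φ)⟩
        simp only [LinearMap.coe_mk, AddHom.coe_mk, LinearMap.comp_apply]
        rw [dif_pos c3, dif_pos c2, dif_pos c1, V.map_comp h1 h2 h3]
        rfl
      · have c3 : ¬ Set.Icc (min θ ψ) (max θ ψ) ⊆ A := fun c3 => c2 fun z hz => c3 (s2 hz)
        simp only [LinearMap.coe_mk, AddHom.coe_mk, LinearMap.comp_apply]
        rw [dif_neg c3, dif_neg c2]
    · have c3 : ¬ Set.Icc (min θ ψ) (max θ ψ) ⊆ A := fun c3 => c1 fun z hz => c3 (s1 hz)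
      simp only [LinearMap.coe_mk, AddHom.coe_mk, LinearMap.comp_apply]
      rw [dif_neg c3]
      by_cases c2 : Set.Icc (min φ ψ) (max φ ψ) ⊆ A
      · rw [dif_pos c2, dif_neg c1, map_zero]
      · rw [dif_neg c2]
  per θ :=
    { toFun := fun F hθ => V.per θ (F ⟨(hA θ).mp hθ.down⟩)
      map_add' := by intro F G; funext hθ; simp
      map_smul' := by intro a F; funext hθ; simp
      invFun := fun G h2 => (V.per θ).symm (G ⟨(hA θ).mpr h2.down⟩)
      left_inv := by intro F; funext h2; simp
      right_inv := by intro G; funext hθ; simp }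
  per_map {θ φ} h h' := by
    apply LinearMap.ext; intro F; funext hφ
    have e1 : min (θ + 2 * Real.pi) (φ + 2 * Real.pi) = min θ φ + 2 * Real.pi :=
      min_add_add_right θ φ _
    have e2 : max (θ + 2 * Real.pi) (φ + 2 * Real.pi) = max θ φ + 2 * Real.pi :=
      max_add_add_right θ φ _
    have hcc : (Set.Icc (min (θ + 2 * Real.pi) (φ + 2 * Real.pi))
        (max (θ + 2 * Real.pi) (φ + 2 * Real.pi)) ⊆ A) ↔
        (Set.Icc (min θ φ) (max θ φ) ⊆ A) := by
      rw [e1, e2]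
      constructor
      · intro c z hz
        rw [hA z]
        exact c ⟨by linarith [hz.1], by linarith [hz.2]⟩
      · intro c z hz
        have h2 : z - 2 * Real.pi ∈ Set.Icc (min θ φ) (max θ φ) :=
          ⟨by linarith [hz.1], by linarith [hz.2]⟩
        have h3 := (hA (z - 2 * Real.pi)).mp (c h2)
        simpa using h3
    simp only [LinearMap.coe_mk, AddHom.coe_mk, LinearMap.comp_apply, LinearEquiv.coe_coe,
      LinearEquiv.coe_mk]
    by_cases c : Set.Icc (min θ φ) (max θ φ) ⊆ A
    · rw [dif_pos c, dif_pos (hcc.mpr c)]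
      exact V.per_map_apply h h' _
    · rw [dif_neg c, dif_neg (fun cc => c (hcc.mp cc)), map_zero]

/-- `V` is finitistic: it is pointwise finite-dimensional and for each arc
`R̄_n = [α n, α (n+1)]`, every bar in the bar code decomposition of the
restriction `V|_{R̄_n}` has support touching an endpoint of the arc. -/
def Finitistic (V : SRep k Q) : Prop :=
  Pwf V ∧ ∀ n : ℤ, ∃ (B : Type) (Wb : B → SRep k Q) (I : B → Set ℝ),
    (∀ b, BarOn (I b) (Wb b) ∧ I b ⊆ Set.Icc (Q.α n) (Q.α (n + 1)) ∧
      (Q.α n ∈ I b ∨ Q.α (n + 1) ∈ I b)) ∧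
    RepIso (V.restrict (periodize (Set.Icc (Q.α n) (Q.α (n + 1))))
      (periodize_shift _)) (dsum Wb)

end SRep
/-! ## Representations of (finite) quivers of type Ã_n

An `Ã_n` quiver has `N = n + 1` vertices, indexed by `ZMod N`, arranged
counterclockwise in a cycle, with exactly one arrow between the vertices `i` and
`i + 1` for each `i : ZMod N`; the orientation function `o` records its direction
(`o i = true` iff the arrow goes `i → i + 1`). -/

/-- A representation of the `Ã_{N-1}` quiver with orientation `o`. -/
structure CycRep (k : Type) [Field k] (N : ℕ) (o : ZMod N → Bool) where
  M : ZMod N → Type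
  [instAdd : ∀ i, AddCommGroup (M i)]
  [instMod : ∀ i, Module k (M i)]
  up : ∀ i : ZMod N, o i = true → (M i →ₗ[k] M (i + 1))
  down : ∀ i : ZMod N, o i = false → (M (i + 1) →ₗ[k] M i)

attribute [instance] CycRep.instAdd CycRep.instMod

namespace CycRep

variable {k : Type} [Field k] {N : ℕ} {o : ZMod N → Bool}

/-- Transport along an equality of vertices. -/
def castM (A : CycRep k N o) {i i' : ZMod N} (h : i = i') : A.M i ≃ₗ[k] A.M i' :=
  h ▸ LinearEquiv.refl k (A.M i)

/-- Isomorphism of representations of the `Ã_{N-1}` quiver. -/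
def Iso (A B : CycRep k N o) : Prop :=
  ∃ e : ∀ i, A.M i ≃ₗ[k] B.M i,
    (∀ (i : ZMod N) (h : o i = true) (v : A.M i),
        e (i + 1) (A.up i h v) = B.up i h (e i v)) ∧
    (∀ (i : ZMod N) (h : o i = false) (v : A.M (i + 1)),
        e i (A.down i h v) = B.down i h (e (i + 1) v))

def Nonzero (A : CycRep k N o) : Prop := ∃ (i : ZMod N) (v : A.M i), v ≠ 0

/-- Binary direct sum. -/
def prod (A B : CycRep k N o) : CycRep k N o where
  M i := A.M i × B.M i
  up i h := (A.up i h).prodMap (B.up i h)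
  down i h := (A.down i h).prodMap (B.down i h)

/-- Arbitrary direct sum. -/
def dsum {B : Type} (A : B → CycRep k N o) : CycRep k N o where
  M i := Π₀ b, (A b).M i
  up i h := DFinsupp.mapRange.linearMap fun b => (A b).up i h
  down i h := DFinsupp.mapRange.linearMap fun b => (A b).down i h

def Indecomposable (A : CycRep k N o) : Prop :=
  A.Nonzero ∧ ∀ B C : CycRep k N o, B.Nonzero → C.Nonzero → ¬ Iso A (B.prod C)

end CycRep

/-- The basis of the bar on the interval `{a, ..., b} ⊂ ℤ` at the vertex `i`:
integers in the interval congruent to `i` mod `N`. -/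
def cycIdx (N : ℕ) (a b : ℤ) (i : ZMod N) : Type :=
  {m : ℤ // m ∈ Set.Icc a b ∧ ((m : ZMod N) = i)}

variable (k : Type) [Field k]

open Classical in
/-- The bar's map along an arrow `i → i + 1` : `b_m ↦ b_{m+1}` when `m+1` stays in
the interval, and `0` otherwise. -/
def cycBarUp (N : ℕ) (a b : ℤ) (i : ZMod N) :
    (cycIdx N a b i →₀ k) →ₗ[k] (cycIdx N a b (i + 1) →₀ k) :=
  Finsupp.linearCombination k (fun m : cycIdx N a b i =>
    if hm : m.1 + 1 ∈ Set.Icc a b then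
      Finsupp.single (⟨m.1 + 1, hm, by push_cast; rw [m.2.2]⟩ : cycIdx N a b (i + 1)) (1 : k)
    else 0)

open Classical in
/-- The bar's map along an arrow `i + 1 → i` : `b_m ↦ b_{m-1}` when `m-1` stays in
the interval, and `0` otherwise. -/
def cycBarDown (N : ℕ) (a b : ℤ) (i : ZMod N) :
    (cycIdx N a b (i + 1) →₀ k) →ₗ[k] (cycIdx N a b i →₀ k) :=
  Finsupp.linearCombination k (fun m : cycIdx N a b (i + 1) =>
    if hm : m.1 - 1 ∈ Set.Icc a b then
      Finsupp.single (⟨m.1 - 1, hm, by push_cast; rw [m.2.2]; ring⟩ : cycIdx N a b i) (1 : k)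
    else 0)

variable {k}

namespace CycRep

variable {k : Type} [Field k] {N : ℕ} {o : ZMod N → Bool}

/-- `A` is (isomorphic to) the bar on the interval `{a, ..., b}` of `ℤ`. -/
def BarOn (a b : ℤ) (A : CycRep k N o) : Prop :=
  a ≤ b ∧ ∃ e : ∀ i, A.M i ≃ₗ[k] (cycIdx N a b i →₀ k),
    (∀ (i : ZMod N) (h : o i = true) (v : A.M i),
        e (i + 1) (A.up i h v) = cycBarUp k N a b i (e i v)) ∧
    (∀ (i : ZMod N) (h : o i = false) (v : A.M (i + 1)),
        e i (A.down i h v) = cycBarDown k N a b i (e (i + 1) v))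

def IsBar (A : CycRep k N o) : Prop := ∃ a b : ℤ, BarOn a b A

/-- One step `M i ≃ M (i+1)` of the monodromy of a representation all of whose
arrow maps are isomorphisms. -/
def stepC (A : CycRep k N o)
    (hup : ∀ (i : ZMod N) (h : o i = true), Function.Bijective (A.up i h))
    (hdown : ∀ (i : ZMod N) (h : o i = false), Function.Bijective (A.down i h))
    (i : ZMod N) : A.M i ≃ₗ[k] A.M (i + 1) :=
  if h : o i = true then LinearEquiv.ofBijective _ (hup i h)
  else (LinearEquiv.ofBijective _ (hdown i (by revert h; cases o i <;> simp))).symm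

def zigC (A : CycRep k N o)
    (hup : ∀ (i : ZMod N) (h : o i = true), Function.Bijective (A.up i h))
    (hdown : ∀ (i : ZMod N) (h : o i = false), Function.Bijective (A.down i h)) :
    (n : ℕ) → (A.M 0 ≃ₗ[k] A.M (n : ZMod N))
  | 0 => A.castM (by norm_num)
  | (n + 1) => ((A.zigC hup hdown n).trans (A.stepC hup hdown (n : ZMod N))).trans
      (A.castM (by push_cast; ring))

/-- The monodromy `M̂ : M 0 ≃ M 0` obtained by composing the arrow maps and their
inverses once around the cycle. -/
def monodromyC (A : CycRep k N o)
    (hup : ∀ (i : ZMod N) (h : o i = true), Function.Bijective (A.up i h))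
    (hdown : ∀ (i : ZMod N) (h : o i = false), Function.Bijective (A.down i h)) :
    A.M 0 ≃ₗ[k] A.M 0 :=
  (A.zigC hup hdown N).trans (A.castM (by simp))

/-- `A` is a Jordan cell representation of the `Ã_{N-1}` quiver. -/
structure IsJordan (A : CycRep k N o) : Prop where
  bijUp : ∀ (i : ZMod N) (h : o i = true), Function.Bijective (A.up i h)
  bijDown : ∀ (i : ZMod N) (h : o i = false), Function.Bijective (A.down i h)
  dim : ∃ d : ℕ, 1 ≤ d ∧ ∀ i, Module.finrank k (A.M i) = d
  indec : ∀ U W : Submodule k (A.M 0), IsCompl U W →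
      (∀ u ∈ U, A.monodromyC bijUp bijDown u ∈ U) →
      (∀ w ∈ W, A.monodromyC bijUp bijDown w ∈ W) → U = ⊥ ∨ W = ⊥

end CycRep
/-! ## Partitions of the circle and push downs -/

/-- A finite partition of the circle into (at least two) path-connected parts,
presented on the universal cover: `2π`-periodically ordered intervals `J j`
(`j : ℤ`), with `J (j + N)` the translate of `J j`; the parts of the circle are
the images of the `J j`, and `j` reduces mod `N` to the index of the part. -/
structure CircPartition (Q : AtR) where
  N : ℕ
  hN : 2 ≤ N
  J : ℤ → Set ℝ
  nonempty : ∀ j, (J j).Nonempty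
  ordconn : ∀ j, (J j).OrdConnected
  ordered : ∀ {j j' : ℤ}, j < j' → ∀ x ∈ J j, ∀ y ∈ J j', x < y
  cover : ∀ θ : ℝ, ∃ j, θ ∈ J j
  jper : ∀ (j : ℤ) (θ : ℝ), θ ∈ J j ↔ θ + 2 * Real.pi ∈ J (j + N)

namespace CircPartition

variable {Q : AtR} (C : CircPartition Q)

/-- The index of the part containing `θ`. -/
def partIdx (θ : ℝ) : ℤ := Classical.choose (C.cover θ)

lemma mem_partIdx (θ : ℝ) : θ ∈ C.J (C.partIdx θ) := Classical.choose_spec (C.cover θ)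

lemma partIdx_eq {θ : ℝ} {j : ℤ} (h : θ ∈ C.J j) : C.partIdx θ = j := by
  by_contra hne
  rcases lt_or_gt_of_ne hne with hlt | hlt
  · exact lt_irrefl θ (C.ordered hlt _ (C.mem_partIdx θ) _ h)
  · exact lt_irrefl θ (C.ordered hlt _ h _ (C.mem_partIdx θ))

lemma partIdx_shift (θ : ℝ) : C.partIdx (θ + 2 * Real.pi) = C.partIdx θ + C.N :=
  C.partIdx_eq ((C.jper _ _).mp (C.mem_partIdx θ))

/-- The index of the part containing `θ`, as a vertex of the auxiliary quiver. -/
def partZ (θ : ℝ) : ZMod C.N := ((C.partIdx θ : ℤ) : ZMod C.N)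

lemma partZ_shift (θ : ℝ) : C.partZ (θ + 2 * Real.pi) = C.partZ θ := by
  unfold partZ
  rw [C.partIdx_shift θ]
  push_cast
  simp

lemma partZ_congr {θ φ : ℝ} (hp : C.partIdx θ = C.partIdx φ) : C.partZ θ = C.partZ φ := by
  unfold partZ; rw [hp]

lemma partZ_succ {θ φ : ℝ} (hp : C.partIdx φ = C.partIdx θ + 1) :
    C.partZ θ + 1 = C.partZ φ := by
  unfold partZ; rw [hp]; push_cast; ring

lemma partZ_pred {θ φ : ℝ} (hp : C.partIdx θ = C.partIdx φ + 1) :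
    C.partZ θ = C.partZ φ + 1 := by
  unfold partZ; rw [hp]; push_cast; ring

/-- There is an arrow from the part of `J j` to the part of `J (j+1)` in the
auxiliary quiver (their union being automatically path-connected). -/
def dirUp (j : ℤ) : Prop := ∃ x ∈ C.J j, ∃ y ∈ C.J (j + 1), Q.covRel x y

/-- There is an arrow from the part of `J (j+1)` to the part of `J j`. -/
def dirDown (j : ℤ) : Prop := ∃ x ∈ C.J (j + 1), ∃ y ∈ C.J j, Q.covRel x y

end CircPartition

namespace SRep

variable {k : Type} [Field k] {Q : AtR}

/-- `U` is the push down to the continuous quiver of the representation `A` of the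
auxiliary `Ã_{N-1}` quiver of the partition `C` (with orientation `o`):
`U` is constant equal to `A.M i` on the `i`-th part, with identity maps within a
part, the maps of `A` across boundaries of parts, and the evident periodicity. -/
def PushdownOf (C : CircPartition Q) (o : ZMod C.N → Bool) (A : CycRep k C.N o)
    (U : SRep k Q) : Prop :=
  ∃ e : ∀ θ, U.obj θ ≃ₗ[k] A.M (C.partZ θ),
    (∀ {θ φ : ℝ} (h : Q.covRel θ φ) (hp : C.partIdx θ = C.partIdx φ) (v : U.obj θ),
        e φ (U.map h v) = A.castM (C.partZ_congr hp) (e θ v)) ∧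
    (∀ {θ φ : ℝ} (h : Q.covRel θ φ) (hp : C.partIdx φ = C.partIdx θ + 1)
        (ht : o (C.partZ θ) = true) (v : U.obj θ),
        e φ (U.map h v) = A.castM (C.partZ_succ hp) (A.up (C.partZ θ) ht (e θ v))) ∧
    (∀ {θ φ : ℝ} (h : Q.covRel θ φ) (hp : C.partIdx θ = C.partIdx φ + 1)
        (hf : o (C.partZ φ) = false) (v : U.obj θ),
        e φ (U.map h v) = A.down (C.partZ φ) hf (A.castM (C.partZ_pred hp) (e θ v))) ∧
    (∀ (θ : ℝ) (v : U.obj (θ + 2 * Real.pi)),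
        e θ (U.per θ v) = A.castM (C.partZ_shift θ) (e (θ + 2 * Real.pi) v))

/-- Transport between the values of `V` at representative points whose indices
agree modulo the period, using the periodicity isomorphism if needed. -/
def ptBridge (V : SRep k Q) (pt : ℤ → ℝ) (Nn : ℕ)
    (hper : ∀ j : ℤ, pt (j + (Nn : ℤ)) = pt j + 2 * Real.pi) {a b : ℤ}
    (h : a = b ∨ a = b + (Nn : ℤ)) : V.obj (pt a) ≃ₗ[k] V.obj (pt b) :=
  if he : a = b then V.castO (congrArg pt he)
  else (V.castO (show pt a = pt b + 2 * Real.pi by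
      rw [h.resolve_left he]; exact hper b)).trans (V.per (pt b))

lemma zmod_val_succ {N : ℕ} (hN : 2 ≤ N) (i : ZMod N) :
    (((i + 1 : ZMod N).val : ℤ) = (i.val : ℤ) + 1) ∨
      ((i.val : ℤ) + 1 = ((i + 1 : ZMod N).val : ℤ) + (N : ℤ)) := by
  haveI : NeZero N := ⟨by omega⟩
  haveI : Fact (1 < N) := ⟨by omega⟩
  have hval : (i + 1 : ZMod N).val = (i.val + 1) % N := by
    rw [ZMod.val_add, ZMod.val_one]
  have hlt : i.val < N := ZMod.val_lt i
  rcases Nat.lt_or_ge (i.val + 1) N with h | h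
  · left; rw [hval, Nat.mod_eq_of_lt h]; push_cast; ring
  · right
    have he : i.val + 1 = N := by omega
    rw [hval, he, Nat.mod_self]
    push_cast
    omega

/-- The auxiliary representation `M_V` of the auxiliary quiver of a partition `C`,
given by the values of `V` at the representative points `pt`. -/
def auxOfPoints (V : SRep k Q) (C : CircPartition Q) (o : ZMod C.N → Bool) (pt : ℤ → ℝ)
    (hper : ∀ j : ℤ, pt (j + (C.N : ℤ)) = pt j + 2 * Real.pi)
    (hup : ∀ (i : ZMod C.N), o i = true → Q.covRel (pt (i.val : ℤ)) (pt ((i.val : ℤ) + 1)))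
    (hdown : ∀ (i : ZMod C.N), o i = false → Q.covRel (pt ((i.val : ℤ) + 1)) (pt (i.val : ℤ))) :
    CycRep k C.N o where
  M i := V.obj (pt (i.val : ℤ))
  up i h := (V.ptBridge pt C.N hper
      ((zmod_val_succ C.hN i).imp Eq.symm id)).toLinearMap ∘ₗ V.map (hup i h)
  down i h := V.map (hdown i h) ∘ₗ (V.ptBridge pt C.N hper
      ((zmod_val_succ C.hN i).imp Eq.symm id)).symm.toLinearMap

/-- `U` is the refinement of `V` with respect to the partition `C` and the choice
of representative points `pt`: `U(θ) = V(pt (partIdx θ))`, with structure maps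
induced by those of `V` between representative points. -/
def RefinementOf (V : SRep k Q) (C : CircPartition Q) (pt : ℤ → ℝ)
    (hper : ∀ j : ℤ, pt (j + (C.N : ℤ)) = pt j + 2 * Real.pi) (U : SRep k Q) : Prop :=
  (∀ j, pt j ∈ C.J j) ∧
  ∃ e : ∀ θ, U.obj θ ≃ₗ[k] V.obj (pt (C.partIdx θ)),
    (∀ {θ φ : ℝ} (h : Q.covRel θ φ) (hp : C.partIdx θ = C.partIdx φ) (v : U.obj θ),
        e φ (U.map h v) = V.castO (congrArg pt hp) (e θ v)) ∧
    (∀ {θ φ : ℝ} (h : Q.covRel θ φ)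
        (hc : Q.covRel (pt (C.partIdx θ)) (pt (C.partIdx φ))) (v : U.obj θ),
        e φ (U.map h v) = V.map hc (e θ v)) ∧
    (∀ (θ : ℝ) (v : U.obj (θ + 2 * Real.pi)),
        e θ (U.per θ v) = V.per (pt (C.partIdx θ))
          ((V.castO (show pt (C.partIdx (θ + 2 * Real.pi)) = pt (C.partIdx θ) + 2 * Real.pi by
            rw [C.partIdx_shift θ]; exact hper _)) (e (θ + 2 * Real.pi) v)))

end SRep
/-! ## The endomorphism ring -/

namespace SRep

variable {k : Type} [Field k] {Q : AtR}

/-- The endomorphism ring of a representation: the subring of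
`∀ θ, End (V θ)` consisting of the natural families (with multiplication given by
pointwise composition). -/
def endSubring (V : SRep k Q) : Subring (∀ θ, Module.End k (V.obj θ)) where
  carrier := {f | IsHomFam V V f}
  mul_mem' := by
    rintro a b ⟨ha1, ha2⟩ ⟨hb1, hb2⟩
    constructor
    · intro θ φ h v
      simp only [Pi.mul_apply, Module.End.mul_apply]
      rw [hb1 h v, ha1 h]
    · intro θ v
      simp only [Pi.mul_apply, Module.End.mul_apply]
      rw [hb2 θ v, ha2 θ]
  one_mem' := by
    constructor
    · intro θ φ h v; simp
    · intro θ v; simp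
  add_mem' := by
    rintro a b ⟨ha1, ha2⟩ ⟨hb1, hb2⟩
    constructor
    · intro θ φ h v
      simp only [Pi.add_apply, LinearMap.add_apply]
      rw [ha1 h v, hb1 h v, map_add]
    · intro θ v
      simp only [Pi.add_apply, LinearMap.add_apply]
      rw [ha2 θ v, hb2 θ v, map_add]
  zero_mem' := by
    constructor
    · intro θ φ h v; simp
    · intro θ v; simp
  neg_mem' := by
    rintro a ⟨ha1, ha2⟩
    constructor
    · intro θ φ h v
      simp only [Pi.neg_apply, LinearMap.neg_apply]
      rw [ha1 h v, map_neg]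
    · intro θ v
      simp only [Pi.neg_apply, LinearMap.neg_apply]
      rw [ha2 θ v, map_neg]

end SRep

/-! ## Statement 4 -/

/-! ### Auxiliary development -/

lemma two_pi_pos' : (0:ℝ) < 2 * Real.pi := by positivity

section CutSeq

lemma cut_per_mul {K : ℕ} (c : ℤ → ℝ) (hper : ∀ i : ℤ, c (i + K) = c i + 2 * Real.pi)
    (i t : ℤ) : c (i + K * t) = c i + 2 * Real.pi * t := by
  induction t using Int.induction_on with
  | zero => simp
  | succ n ih =>
      have h1 := hper (i + K * n)
      rw [show i + (K:ℤ) * ((n:ℤ) + 1) = (i + K * n) + K by ring, h1, ih]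
      push_cast; ring
  | pred n ih =>
      have h1 := hper (i + K * (-(n:ℤ) - 1))
      rw [show (i + (K:ℤ) * (-(n:ℤ) - 1)) + (K:ℤ) = i + K * (-(n:ℤ)) by ring] at h1
      have h2 : c (i + K * (-(n:ℤ) - 1)) = c (i + K * (-(n:ℤ))) - 2 * Real.pi := by
        linarith
      rw [h2, ih]
      push_cast; ring

lemma cut_exists_Ico {K : ℕ} (hK : 0 < K) (c : ℤ → ℝ) (hmono : StrictMono c)
    (hper : ∀ i : ℤ, c (i + K) = c i + 2 * Real.pi) (θ : ℝ) :
    ∃ i : ℤ, c i ≤ θ ∧ θ < c (i + 1) := by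
  have hpm := cut_per_mul c hper
  have h2π := two_pi_pos'
  -- nonempty
  obtain ⟨t, ht⟩ := exists_int_ge ((c 0 - θ) / (2 * Real.pi))
  have hne : ∃ i : ℤ, c i ≤ θ := by
    refine ⟨0 + K * (-t), ?_⟩
    rw [hpm]
    have : c 0 - θ ≤ 2 * Real.pi * t := by
      rw [div_le_iff₀ h2π] at ht; linarith [ht]
    push_cast
    linarith
  -- bounded
  obtain ⟨T, hT⟩ := exists_int_ge ((θ - c 0) / (2 * Real.pi))
  have hbdd : ∃ b : ℤ, ∀ i : ℤ, c i ≤ θ → i ≤ b := by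
    refine ⟨K * T + K, ?_⟩
    intro i hi
    by_contra hgt
    push_neg at hgt
    have h1 : (K:ℤ) * T ≤ i := by omega
    have h2 : c (0 + K * T) ≤ c i := by
      apply hmono.monotone; omega
    rw [hpm] at h2
    have h3 : θ - c 0 ≤ 2 * Real.pi * T := by
      rw [div_le_iff₀ h2π] at hT; linarith [hT]
    have h4 : c (0 + K * T) < c i := by
      apply hmono; omega
    rw [hpm] at h4
    linarith
  obtain ⟨i, hi, hmax⟩ := Int.exists_greatest_of_bdd hbdd hne
  refine ⟨i, hi, ?_⟩
  by_contra hle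
  push_neg at hle
  have := hmax (i + 1) hle
  omega

end CutSeq

namespace AtR

variable {Q : AtR}

lemma alpha_add_period (j : ℤ) : Q.α (j + Q.periodN) = Q.α j + 2 * Real.pi := by
  unfold periodN
  split_ifs with hm
  · rw [show j + ((2:ℕ):ℤ) = j + 2 by norm_cast, Q.cyc hm, Q.cyc hm]
    push_cast; ring
  · have h := Q.per hm j
    rw [← h]
    norm_cast

lemma mem_arc (θ : ℝ) : ∃ j : ℤ, θ ∈ Set.Icc (Q.α j) (Q.α (j + 1)) := by
  obtain ⟨j, h1, h2⟩ := cut_exists_Ico Q.periodN_pos Q.α Q.mono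
    (fun i => alpha_add_period i) θ
  exact ⟨j, h1, le_of_lt h2⟩

lemma covRel_refl (θ : ℝ) : Q.covRel θ θ := by
  unfold covRel
  split_ifs with hm
  · exact le_rfl
  · obtain ⟨j, hj⟩ := mem_arc (Q := Q) θ
    by_cases he : Even j
    · exact ⟨j, hj, hj, Or.inl ⟨he, le_rfl⟩⟩
    · exact ⟨j, hj, hj, Or.inr ⟨he, le_rfl⟩⟩

/-- The total order along arc `j`. -/
def dirLE (Q : AtR) (j : ℤ) (θ φ : ℝ) : Prop :=
  if Q.m = 0 ∨ ¬ Even j then θ ≤ φ else φ ≤ θ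

lemma dirLE_refl (j : ℤ) (θ : ℝ) : Q.dirLE j θ θ := by
  unfold dirLE; split_ifs <;> exact le_rfl

lemma dirLE_trans {j : ℤ} {θ φ ψ : ℝ} (h1 : Q.dirLE j θ φ) (h2 : Q.dirLE j φ ψ) :
    Q.dirLE j θ ψ := by
  unfold dirLE at *; split_ifs at * <;> linarith

lemma dirLE_total (j : ℤ) (θ φ : ℝ) : Q.dirLE j θ φ ∨ Q.dirLE j φ θ := by
  unfold dirLE; split_ifs <;> exact le_total _ _

lemma covRel_of_dirLE {j : ℤ} {θ φ : ℝ} (hθ : θ ∈ Set.Icc (Q.α j) (Q.α (j + 1)))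
    (hφ : φ ∈ Set.Icc (Q.α j) (Q.α (j + 1))) (h : Q.dirLE j θ φ) : Q.covRel θ φ := by
  unfold dirLE at h
  unfold covRel
  by_cases hm : Q.m = 0
  · rw [if_pos hm]
    rw [if_pos (Or.inl hm)] at h
    exact h
  · rw [if_neg hm]
    by_cases he : Even j
    · rw [if_neg (by tauto)] at h
      exact ⟨j, hθ, hφ, Or.inl ⟨he, h⟩⟩
    · rw [if_pos (Or.inr he)] at h
      exact ⟨j, hθ, hφ, Or.inr ⟨he, h⟩⟩

lemma dirLE_of_covRel {j : ℤ} {θ φ : ℝ} (h : Q.covRel θ φ)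
    (hθ : θ ∈ Set.Icc (Q.α j) (Q.α (j + 1))) (hφ : φ ∈ Set.Icc (Q.α j) (Q.α (j + 1))) :
    Q.dirLE j θ φ := by
  unfold covRel at h
  unfold dirLE
  by_cases hm : Q.m = 0
  · rw [if_pos hm] at h
    rw [if_pos (Or.inl hm)]
    exact h
  · rw [if_neg hm] at h
    obtain ⟨j', hθ', hφ', hp⟩ := h
    by_cases hjj : j' = j
    · subst hjj
      rcases hp with ⟨he, hle⟩ | ⟨ho, hle⟩
      · rw [if_neg (by tauto)]; exact hle
      · rw [if_pos (Or.inr ho)]; exact hle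
    · have hθe := arcs_overlap hθ' hθ hjj
      have hφe := arcs_overlap hφ' hφ hjj
      have hθφ : θ = φ := by
        rcases hθe with ⟨e1, e2⟩ | ⟨e1, e2⟩ <;> rcases hφe with ⟨f1, f2⟩ | ⟨f1, f2⟩ <;>
          first | omega | (rw [e2, f2])
      rw [hθφ]
      split_ifs <;> exact le_rfl

lemma two_le_periodN : 2 ≤ Q.periodN := by
  unfold periodN; split_ifs with h <;> omega

lemma arc_lt_two_pi (j : ℤ) : Q.α (j + 1) < Q.α j + 2 * Real.pi := by
  have h := alpha_add_period (Q := Q) j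
  have h2 := two_le_periodN (Q := Q)
  calc Q.α (j + 1) < Q.α (j + Q.periodN) := Q.mono (by omega)
    _ = Q.α j + 2 * Real.pi := h

lemma even_shift (j : ℤ) (m : ℕ) : Even (j + 2 * (m:ℤ)) ↔ Even j := by
  rw [Int.even_add]
  simp [Int.even_mul]

lemma covRel_shift {θ φ : ℝ} :
    Q.covRel (θ + 2 * Real.pi) (φ + 2 * Real.pi) ↔ Q.covRel θ φ := by
  unfold covRel
  by_cases hm : Q.m = 0
  · rw [if_pos hm, if_pos hm]
    constructor <;> intro h <;> linarith
  · rw [if_neg hm, if_neg hm]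
    constructor
    · rintro ⟨j, hθ, hφ, hp⟩
      refine ⟨j - 2 * Q.m, ?_, ?_, ?_⟩
      · have e1 : Q.α j = Q.α (j - 2 * Q.m) + 2 * Real.pi := by
          have := Q.per hm (j - 2 * Q.m); rw [show j - 2*(Q.m:ℤ) + 2*Q.m = j by ring] at this
          exact this
        have e2 : Q.α (j + 1) = Q.α (j - 2 * Q.m + 1) + 2 * Real.pi := by
          have := Q.per hm (j - 2 * Q.m + 1)
          rw [show j - 2*(Q.m:ℤ) + 1 + 2*Q.m = j + 1 by ring] at this
          exact this
        exact ⟨by nlinarith [hθ.1, e1.ge], by nlinarith [hθ.2, e2.le]⟩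
      · have e1 : Q.α j = Q.α (j - 2 * Q.m) + 2 * Real.pi := by
          have := Q.per hm (j - 2 * Q.m); rw [show j - 2*(Q.m:ℤ) + 2*Q.m = j by ring] at this
          exact this
        have e2 : Q.α (j + 1) = Q.α (j - 2 * Q.m + 1) + 2 * Real.pi := by
          have := Q.per hm (j - 2 * Q.m + 1)
          rw [show j - 2*(Q.m:ℤ) + 1 + 2*Q.m = j + 1 by ring] at this
          exact this
        exact ⟨by linarith [hφ.1], by linarith [hφ.2]⟩
      · have hpar : Even (j - 2 * (Q.m:ℤ)) ↔ Even j := by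
          rw [show j - 2*(Q.m:ℤ) = j + 2 * (-(Q.m:ℤ)) by ring, Int.even_add]
          simp [Int.even_mul]
        rcases hp with ⟨he, hle⟩ | ⟨ho, hle⟩
        · exact Or.inl ⟨hpar.mpr he, by linarith⟩
        · exact Or.inr ⟨fun hc => ho (hpar.mp hc), by linarith⟩
    · rintro ⟨j, hθ, hφ, hp⟩
      refine ⟨j + 2 * Q.m, ?_, ?_, ?_⟩
      · have e1 := Q.per hm j
        have e2 : Q.α (j + 2 * Q.m + 1) = Q.α (j + 1) + 2 * Real.pi := by
          have := Q.per hm (j + 1)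
          rw [show j + 2*(Q.m:ℤ) + 1 = j + 1 + 2*Q.m by ring]
          exact this
        exact ⟨by linarith [hθ.1], by linarith [hθ.2]⟩
      · have e1 := Q.per hm j
        have e2 : Q.α (j + 2 * Q.m + 1) = Q.α (j + 1) + 2 * Real.pi := by
          have := Q.per hm (j + 1)
          rw [show j + 2*(Q.m:ℤ) + 1 = j + 1 + 2*Q.m by ring]
          exact this
        exact ⟨by linarith [hφ.1], by linarith [hφ.2]⟩
      · rcases hp with ⟨he, hle⟩ | ⟨ho, hle⟩
        · exact Or.inl ⟨(even_shift j Q.m).mpr he, by linarith⟩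
        · exact Or.inr ⟨fun hc => ho ((even_shift j Q.m).mp hc), by linarith⟩

lemma covRel_shiftZ (t : ℤ) {θ φ : ℝ} :
    Q.covRel (θ + 2 * Real.pi * t) (φ + 2 * Real.pi * t) ↔ Q.covRel θ φ := by
  induction t using Int.induction_on with
  | zero => push_cast; rw [mul_zero, add_zero, add_zero]
  | succ n ih =>
      have e1 : θ + 2 * Real.pi * (((n:ℤ) + 1 : ℤ) : ℝ) = (θ + 2*Real.pi*((n:ℤ):ℝ)) + 2*Real.pi := by
        push_cast; ring
      have e2 : φ + 2 * Real.pi * (((n:ℤ) + 1 : ℤ) : ℝ) = (φ + 2*Real.pi*((n:ℤ):ℝ)) + 2*Real.pi := by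
        push_cast; ring
      rw [e1, e2, covRel_shift, ih]
  | pred n ih =>
      have e1 : θ + 2 * Real.pi * ((-(n:ℤ) : ℤ) : ℝ) = (θ + 2*Real.pi*((-(n:ℤ) - 1 : ℤ):ℝ)) + 2*Real.pi := by
        push_cast; ring
      have e2 : φ + 2 * Real.pi * ((-(n:ℤ) : ℤ) : ℝ) = (φ + 2*Real.pi*((-(n:ℤ) - 1 : ℤ):ℝ)) + 2*Real.pi := by
        push_cast; ring
      rw [e1, e2, covRel_shift] at ih
      exact ih

end AtR

namespace SRep

variable {k : Type} [Field k] {Q : AtR}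

lemma map_eq_castO (V : SRep k Q) {a b : ℝ} (e : a = b) (h : Q.covRel a b) (v : V.obj a) :
    V.map h v = V.castO e v := by
  subst e
  rw [V.map_id a h]
  rfl

lemma map_castO (V : SRep k Q) {a b a' b' : ℝ} (ea : a = a') (eb : b = b')
    (h : Q.covRel a b) (h' : Q.covRel a' b') (v : V.obj a) :
    V.map h' (V.castO ea v) = V.castO eb (V.map h v) := by
  subst ea; subst eb; rfl

lemma bij_congr (V : SRep k Q) {a b a' b' : ℝ} (ea : a = a') (eb : b = b')
    (h : Q.covRel a b) (h' : Q.covRel a' b') :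
    Function.Bijective (V.map h') ↔ Function.Bijective (V.map h) := by
  subst ea; subst eb; rfl

lemma bij_shift (V : SRep k Q) {θ φ : ℝ} (h : Q.covRel θ φ)
    (h' : Q.covRel (θ + 2 * Real.pi) (φ + 2 * Real.pi)) :
    Function.Bijective (V.map h') ↔ Function.Bijective (V.map h) := by
  have e1 : (V.map h) ∘ (V.per θ) = (V.per φ) ∘ (V.map h') :=
    funext fun v => V.per_map_apply h h' v
  have h2 : Function.Bijective ((V.map h) ∘ (V.per θ)) ↔ Function.Bijective (V.map h) :=
    (Function.Bijective.of_comp_iff _ (V.per θ).bijective)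
  have h3 : Function.Bijective ((V.per φ) ∘ (V.map h')) ↔ Function.Bijective (V.map h') :=
    (Function.Bijective.of_comp_iff' (V.per φ).bijective _)
  rw [← h3, ← e1, h2]

lemma bij_shiftZ (V : SRep k Q) (t : ℤ) {θ φ : ℝ} (h : Q.covRel θ φ) :
    ∀ (h' : Q.covRel (θ + 2 * Real.pi * t) (φ + 2 * Real.pi * t)),
      Function.Bijective (V.map h') ↔ Function.Bijective (V.map h) := by
  induction t using Int.induction_on with
  | zero =>
      intro h'
      exact V.bij_congr (by push_cast; ring) (by push_cast; ring) h h'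
  | succ n ih =>
      intro h'
      have hmid : Q.covRel (θ + 2*Real.pi*((n:ℤ):ℝ)) (φ + 2*Real.pi*((n:ℤ):ℝ)) :=
        (AtR.covRel_shiftZ (n:ℤ)).mpr h
      have hS : Q.covRel ((θ + 2*Real.pi*((n:ℤ):ℝ)) + 2*Real.pi)
          ((φ + 2*Real.pi*((n:ℤ):ℝ)) + 2*Real.pi) := AtR.covRel_shift.mpr hmid
      have c1 := V.bij_congr (a := (θ + 2*Real.pi*((n:ℤ):ℝ)) + 2*Real.pi)
        (b := (φ + 2*Real.pi*((n:ℤ):ℝ)) + 2*Real.pi)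
        (by push_cast; ring) (by push_cast; ring) hS h'
      exact c1.trans ((V.bij_shift hmid hS).trans (ih hmid))
  | pred n ih =>
      intro h'
      have hmid : Q.covRel (θ + 2*Real.pi*((-(n:ℤ):ℤ):ℝ)) (φ + 2*Real.pi*((-(n:ℤ):ℤ):ℝ)) :=
        (AtR.covRel_shiftZ (-(n:ℤ))).mpr h
      have hS : Q.covRel ((θ + 2*Real.pi*((-(n:ℤ)-1:ℤ):ℝ)) + 2*Real.pi)
          ((φ + 2*Real.pi*((-(n:ℤ)-1:ℤ):ℝ)) + 2*Real.pi) := by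
        have e1 : (θ + 2*Real.pi*((-(n:ℤ)-1:ℤ):ℝ)) + 2*Real.pi = θ + 2*Real.pi*((-(n:ℤ):ℤ):ℝ) := by
          push_cast; ring
        have e2 : (φ + 2*Real.pi*((-(n:ℤ)-1:ℤ):ℝ)) + 2*Real.pi = φ + 2*Real.pi*((-(n:ℤ):ℤ):ℝ) := by
          push_cast; ring
        rw [e1, e2]; exact hmid
      have hbase : Q.covRel (θ + 2*Real.pi*((-(n:ℤ)-1:ℤ):ℝ)) (φ + 2*Real.pi*((-(n:ℤ)-1:ℤ):ℝ)) :=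
        (AtR.covRel_shiftZ (-(n:ℤ)-1)).mpr h
      have c1 := V.bij_congr (a := (θ + 2*Real.pi*((-(n:ℤ)-1:ℤ):ℝ)) + 2*Real.pi)
        (b := (φ + 2*Real.pi*((-(n:ℤ)-1:ℤ):ℝ)) + 2*Real.pi)
        (by push_cast; ring) (by push_cast; ring) hS hmid
      have c2 := V.bij_congr (a := θ + 2*Real.pi*((-(n:ℤ)-1:ℤ):ℝ))
        (b := φ + 2*Real.pi*((-(n:ℤ)-1:ℤ):ℝ))
        (by push_cast; ring) (by push_cast; ring) hbase h'
      exact c2.trans ((V.bij_shift hbase hS).symm.trans (c1.symm.trans (ih hmid)))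

end SRep

section BarBij

variable {k : Type} [Field k] {Q : AtR}

lemma barIdx_val_eq {n : ℤ} {I : Set ℝ} (hI : I ⊆ Set.Icc (Q.α n) (Q.α (n+1)))
    {θ : ℝ} (hθ : θ ∈ Set.Icc (Q.α n) (Q.α (n+1))) (β : barIdx I θ) : β.1 = θ := by
  obtain ⟨hβI, t, ht⟩ := β.2
  have hβ : β.1 ∈ Set.Icc (Q.α n) (Q.α (n+1)) := hI hβI
  have harc := AtR.arc_lt_two_pi (Q := Q) n
  have h2π := two_pi_pos'
  have h1 : |(t:ℝ)| < 1 := by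
    rw [abs_lt]
    constructor
    · by_contra hcon
      push_neg at hcon
      have : (t:ℝ) ≤ -1 := hcon
      have := hβ.1; have := hθ.2
      nlinarith [ht]
    · by_contra hcon
      push_neg at hcon
      have : (1:ℝ) ≤ t := hcon
      have := hβ.2; have := hθ.1
      nlinarith [ht]
  have h2 : |t| < 1 := by
    have h1' := h1
    rw [← Int.cast_abs] at h1'
    exact_mod_cast h1'
  have h3 : t = 0 := by rw [abs_lt] at h2; omega
  rw [ht, h3]
  push_cast; ring

lemma barMapHom_bij_mem {I : Set ℝ} {θ φ : ℝ} (hid : ∀ β : barIdx I θ, β.1 = θ)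
    (hid' : ∀ β : barIdx I φ, β.1 = φ) (hθI : θ ∈ I) (hφI : φ ∈ I) :
    Function.Bijective (barMapHom k I θ φ) := by
  classical
  have key : ∀ (a b : ℝ) (hida : ∀ β : barIdx I a, β.1 = a)
      (_ : a ∈ I) (hbI : b ∈ I) (x : barIdx I a →₀ k),
      barMapHom k I b a (barMapHom k I a b x) = x := by
    intro a b hida haI hbI x
    induction x using Finsupp.induction_linear with
    | zero => simp
    | add f g hf hg => rw [map_add, map_add, hf, hg]
    | single β c =>
        unfold barMapHom
        rw [Finsupp.linearCombination_single]
        have hc1 : β.1 - a + b ∈ I := by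
          rw [hida β, show a - a + b = b by ring]; exact hbI
        rw [dif_pos hc1, map_smul]
        erw [Finsupp.linearCombination_single]
        rw [one_smul]
        have hc2 : β.1 - a + b - b + a ∈ I := by
          have e : β.1 - a + b - b + a = β.1 := by ring
          rw [e]; exact β.2.1
        rw [dif_pos hc2]
        erw [Finsupp.smul_single]
        rw [smul_eq_mul, mul_one]
        congr 1
        exact Subtype.ext (by ring)
  have h1 := key θ φ hid hθI hφI
  have h2 := key φ θ hid' hφI hθI
  exact ⟨Function.LeftInverse.injective h1, Function.RightInverse.surjective h2⟩

lemma barMapHom_bij_empty {I : Set ℝ} {θ φ : ℝ} (he : IsEmpty (barIdx I θ))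
    (he' : IsEmpty (barIdx I φ)) : Function.Bijective (barMapHom k I θ φ) := by
  haveI hs1 : Subsingleton (barIdx I θ →₀ k) :=
    ⟨fun f g => Finsupp.ext (fun a => he.elim a)⟩
  haveI hs2 : Subsingleton (barIdx I φ →₀ k) :=
    ⟨fun f g => Finsupp.ext (fun a => he'.elim a)⟩
  exact ⟨fun x y _ => Subsingleton.elim x y, fun y => ⟨0, Subsingleton.elim _ _⟩⟩

end BarBij

namespace SRep

variable {k : Type} [Field k] {Q : AtR}

lemma bij_of_conj {X Y X' Y' : Type} [AddCommGroup X] [Module k X] [AddCommGroup Y]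
    [Module k Y] [AddCommGroup X'] [Module k X'] [AddCommGroup Y'] [Module k Y']
    (e1 : X ≃ₗ[k] X') (e2 : Y ≃ₗ[k] Y') (f : X →ₗ[k] Y) (g : X' →ₗ[k] Y')
    (hcomm : ∀ v, e2 (f v) = g (e1 v)) (hg : Function.Bijective g) :
    Function.Bijective f := by
  have hfe : (⇑f) = (⇑e2.symm) ∘ (⇑g) ∘ (⇑e1) := by
    funext v
    simp only [Function.comp_apply]
    rw [← hcomm v]
    simp
  rw [hfe]
  exact e2.symm.bijective.comp (hg.comp e1.bijective)

lemma dsum_map_bij {B : Type} {A : B → SRep k Q} {θ φ : ℝ} (h : Q.covRel θ φ)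
    (hb : ∀ b, Function.Bijective ((A b).map h)) :
    Function.Bijective ((dsum A).map h) := by
  classical
  let einv : ∀ b, (A b).obj φ →ₗ[k] (A b).obj θ :=
    fun b => (LinearEquiv.ofBijective _ (hb b)).symm.toLinearMap
  have hleft : ∀ b, (einv b).comp ((A b).map h) = LinearMap.id := by
    intro b
    apply LinearMap.ext
    intro v
    exact (LinearEquiv.ofBijective _ (hb b)).symm_apply_apply v
  have hright : ∀ b, ((A b).map h).comp (einv b) = LinearMap.id := by
    intro b
    apply LinearMap.ext
    intro v
    exact (LinearEquiv.ofBijective _ (hb b)).apply_symm_apply v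
  have e1 : (DFinsupp.mapRange.linearMap einv).comp
      (DFinsupp.mapRange.linearMap (fun b => (A b).map h)) = LinearMap.id := by
    rw [← DFinsupp.mapRange.linearMap_comp]
    have : (fun b => (einv b).comp ((A b).map h)) =
        (fun b => (LinearMap.id : (A b).obj θ →ₗ[k] _)) := funext hleft
    rw [this, DFinsupp.mapRange.linearMap_id]
  have e2 : (DFinsupp.mapRange.linearMap (fun b => (A b).map h)).comp
      (DFinsupp.mapRange.linearMap einv) = LinearMap.id := by
    rw [← DFinsupp.mapRange.linearMap_comp]
    have : (fun b => ((A b).map h).comp (einv b)) =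
        (fun b => (LinearMap.id : (A b).obj φ →ₗ[k] _)) := funext hright
    rw [this, DFinsupp.mapRange.linearMap_id]
  constructor
  · intro x y hxy
    have := congrArg (DFinsupp.mapRange.linearMap einv) hxy
    have h1 := LinearMap.congr_fun e1 x
    have h2 := LinearMap.congr_fun e1 y
    change (DFinsupp.mapRange.linearMap einv) ((DFinsupp.mapRange.linearMap (fun b => (A b).map h)) x) = x at h1
    change (DFinsupp.mapRange.linearMap einv) ((DFinsupp.mapRange.linearMap (fun b => (A b).map h)) y) = y at h2
    rw [← h1, ← h2]
    exact congrArg _ hxy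
  · intro y
    refine ⟨DFinsupp.mapRange.linearMap einv y, ?_⟩
    have h1 := LinearMap.congr_fun e2 y
    exact h1

lemma bij_of_restrict (V : SRep k Q) {A : Set ℝ}
    (hA : ∀ θ, θ ∈ A ↔ θ + 2 * Real.pi ∈ A) {θ φ : ℝ} (h : Q.covRel θ φ)
    (hsub : Set.Icc (min θ φ) (max θ φ) ⊆ A)
    (hr : Function.Bijective ((V.restrict A hA).map h)) :
    Function.Bijective (V.map h) := by
  classical
  have hθA : θ ∈ A := hsub ⟨min_le_left θ φ, le_max_left θ φ⟩
  have hφA : φ ∈ A := hsub ⟨min_le_right θ φ, le_max_right θ φ⟩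
  have hres : ∀ (F : PLift (θ ∈ A) → V.obj θ) (p : PLift (φ ∈ A)),
      (V.restrict A hA).map h F p = V.map h (F ⟨hsub ⟨min_le_left θ φ, le_max_left θ φ⟩⟩) := by
    intro F p
    show (if c : Set.Icc (min θ φ) (max θ φ) ⊆ A then
        V.map h (F ⟨c ⟨min_le_left θ φ, le_max_left θ φ⟩⟩) else 0) = _
    rw [dif_pos hsub]
  constructor
  · intro x y hxy
    have hFxy : (V.restrict A hA).map h (fun _ => x) = (V.restrict A hA).map h (fun _ => y) := by
      funext p
      rw [hres, hres, hxy]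
    have := hr.1 hFxy
    exact congrFun this ⟨hθA⟩
  · intro w
    obtain ⟨F, hF⟩ := hr.2 (fun _ => w)
    refine ⟨F ⟨hsub ⟨min_le_left θ φ, le_max_left θ φ⟩⟩, ?_⟩
    have := congrFun hF ⟨hφA⟩
    rw [hres F ⟨hφA⟩] at this
    exact this

/-- The key bijectivity lemma: if `θ, φ` lie in the arc `[α n, α (n+1)]` and belong
to exactly the same bars of a bar decomposition of `V` restricted to that arc, then
the structure map `V (θ → φ)` is an isomorphism. -/
lemma key_bij (V : SRep k Q) {n : ℤ} {B : Type} {Wb : B → SRep k Q} {I : B → Set ℝ}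
    (hbars : ∀ b, BarOn (I b) (Wb b) ∧ I b ⊆ Set.Icc (Q.α n) (Q.α (n + 1)) ∧
      (Q.α n ∈ I b ∨ Q.α (n + 1) ∈ I b))
    (hiso : RepIso (V.restrict (periodize (Set.Icc (Q.α n) (Q.α (n + 1))))
      (periodize_shift _)) (dsum Wb))
    {θ φ : ℝ} (hθ : θ ∈ Set.Icc (Q.α n) (Q.α (n + 1)))
    (hφ : φ ∈ Set.Icc (Q.α n) (Q.α (n + 1)))
    (hmem : ∀ b, θ ∈ I b ↔ φ ∈ I b)
    (h : Q.covRel θ φ) : Function.Bijective (V.map h) := by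
  -- each bar map is bijective
  have hbarbij : ∀ b, Function.Bijective ((Wb b).map h) := by
    intro b
    obtain ⟨hbar, hIsub, _⟩ := hbars b
    obtain ⟨hne, hbdd, hoc, e, he, _⟩ := hbar
    refine bij_of_conj (e θ) (e φ) ((Wb b).map h) (barMapHom k (I b) θ φ)
      (fun v => he h v) ?_
    by_cases hin : θ ∈ I b
    · exact barMapHom_bij_mem (fun β => barIdx_val_eq hIsub hθ β)
        (fun β => barIdx_val_eq hIsub hφ β) hin ((hmem b).mp hin)
    · have hout : φ ∉ I b := fun hc => hin ((hmem b).mpr hc)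
      refine barMapHom_bij_empty ⟨fun β => hin ?_⟩ ⟨fun β => hout ?_⟩
      · rw [← barIdx_val_eq hIsub hθ β]; exact β.2.1
      · rw [← barIdx_val_eq hIsub hφ β]; exact β.2.1
  have hdsum : Function.Bijective ((dsum Wb).map h) := dsum_map_bij h hbarbij
  obtain ⟨e, he, -⟩ := hiso
  have hres : Function.Bijective ((V.restrict (periodize (Set.Icc (Q.α n) (Q.α (n + 1))))
      (periodize_shift _)).map h) :=
    bij_of_conj (e θ) (e φ) _ _ (fun v => he h v) hdsum
  refine V.bij_of_restrict _ h ?_ hres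
  intro z hz
  refine ⟨0, ?_⟩
  push_cast
  rw [mul_zero, add_zero]
  rcases le_total θ φ with hc | hc
  · rw [min_eq_left hc, max_eq_right hc] at hz
    exact ⟨le_trans hθ.1 hz.1, le_trans hz.2 hφ.2⟩
  · rw [min_eq_right hc, max_eq_left hc] at hz
    exact ⟨le_trans hφ.1 hz.1, le_trans hz.2 hθ.2⟩

end SRep

section Finiteness

variable {k : Type} [Field k] {Q : AtR}

lemma finite_nonzero_components {B : Type} {M : B → Type} [∀ b, AddCommGroup (M b)]
    [∀ b, Module k (M b)] [FiniteDimensional k (Π₀ b, M b)] (w : ∀ b, M b) :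
    {b | w b ≠ 0}.Finite := by
  classical
  have hli : LinearIndependent k
      (fun b : {b // w b ≠ 0} => (DFinsupp.single b.1 (w b.1) : Π₀ b, M b)) := by
    rw [linearIndependent_iff']
    intro s g hsum i0 hi0
    have h0 := congrArg (DFinsupp.lapply (R := k) (i := i0.1)) hsum
    rw [map_sum, map_zero] at h0
    rw [Finset.sum_eq_single_of_mem i0 hi0 (fun b _ hb => by
      rw [LinearMap.map_smul]
      have hne : b.1 ≠ i0.1 := fun hc => hb (Subtype.ext hc)
      rw [DFinsupp.lapply_apply, DFinsupp.single_eq_of_ne (Ne.symm hne), smul_zero])] at h0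
    rw [LinearMap.map_smul, DFinsupp.lapply_apply, DFinsupp.single_eq_same] at h0
    rcases smul_eq_zero.mp h0 with hg | hw
    · exact hg
    · exact absurd hw i0.2
  exact Set.finite_coe_iff.mp hli.finite

/-- `(PLift p → M) ≃ₗ M` when `p` holds. -/
def constEquiv {p : Prop} (hp : p) (M : Type) [AddCommGroup M] [Module k M] :
    (PLift p → M) ≃ₗ[k] M where
  toFun F := F ⟨hp⟩
  invFun v := fun _ => v
  map_add' _ _ := rfl
  map_smul' _ _ := rfl
  left_inv F := funext fun q => by cases q; rfl
  right_inv v := rfl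

open SRep in
lemma finite_bar_type (V : SRep k Q) (hpwf : Pwf V) {n : ℤ} {B : Type} {Wb : B → SRep k Q}
    {I : B → Set ℝ}
    (hbars : ∀ b, BarOn (I b) (Wb b) ∧ I b ⊆ Set.Icc (Q.α n) (Q.α (n + 1)) ∧
      (Q.α n ∈ I b ∨ Q.α (n + 1) ∈ I b))
    (hiso : RepIso (V.restrict (periodize (Set.Icc (Q.α n) (Q.α (n + 1))))
      (periodize_shift _)) (dsum Wb)) :
    Finite B := by
  classical
  obtain ⟨e, -, -⟩ := hiso
  set A := periodize (Set.Icc (Q.α n) (Q.α (n + 1))) with hAdef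
  have hptfin : ∀ θ₀ : ℝ, θ₀ ∈ A → {b | θ₀ ∈ I b}.Finite := by
    intro θ₀ hθ₀A
    haveI hfd : FiniteDimensional k (Π₀ b, (Wb b).obj θ₀) := by
      haveI h1 : FiniteDimensional k (V.obj θ₀) := hpwf θ₀
      exact LinearEquiv.finiteDimensional
        (((constEquiv hθ₀A (V.obj θ₀)).symm.trans (e θ₀)))
    have hnz : ∀ b, θ₀ ∈ I b → ∃ v : (Wb b).obj θ₀, v ≠ 0 := by
      intro b hb
      obtain ⟨-, -, -, eb, -, -⟩ := (hbars b).1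
      refine ⟨(eb θ₀).symm (Finsupp.single ⟨θ₀, hb, 0, by push_cast; ring⟩ 1), ?_⟩
      intro hc
      rw [LinearEquiv.map_eq_zero_iff] at hc
      exact one_ne_zero (Finsupp.single_eq_zero.mp hc)
    set w : ∀ b, (Wb b).obj θ₀ := fun b => if h : θ₀ ∈ I b then (hnz b h).choose else 0
      with hwdef
    refine (finite_nonzero_components (k := k) w).subset ?_
    intro b hb
    have : w b = (hnz b hb).choose := by rw [hwdef]; exact dif_pos hb
    rw [Set.mem_setOf_eq, this]
    exact (hnz b hb).choose_spec
  have hmemn : Q.α n ∈ A := by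
    refine ⟨0, ?_⟩
    push_cast
    rw [mul_zero, add_zero]
    exact ⟨le_rfl, Q.mono.monotone (by omega)⟩
  have hmemn1 : Q.α (n+1) ∈ A := by
    refine ⟨0, ?_⟩
    push_cast
    rw [mul_zero, add_zero]
    exact ⟨Q.mono.monotone (by omega), le_rfl⟩
  have h1 : {b | Q.α n ∈ I b}.Finite := hptfin (Q.α n) hmemn
  have h2 : {b | Q.α (n+1) ∈ I b}.Finite := hptfin (Q.α (n+1)) hmemn1
  have : (Set.univ : Set B) ⊆ {b | Q.α n ∈ I b} ∪ {b | Q.α (n+1) ∈ I b} := by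
    intro b _
    exact (hbars b).2.2
  have := ((h1.union h2).subset this)
  exact Set.finite_univ_iff.mp this

lemma finite_bar_ends (V : SRep k Q) (hpwf : SRep.Pwf V) {n : ℤ} {B : Type}
    {Wb : B → SRep k Q} {I : B → Set ℝ}
    (hbars : ∀ b, SRep.BarOn (I b) (Wb b) ∧ I b ⊆ Set.Icc (Q.α n) (Q.α (n + 1)) ∧
      (Q.α n ∈ I b ∨ Q.α (n + 1) ∈ I b))
    (hiso : SRep.RepIso (V.restrict (periodize (Set.Icc (Q.α n) (Q.α (n + 1))))
      (periodize_shift _)) (SRep.dsum Wb)) :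
    {x : ℝ | ∃ b, x = sInf (I b) ∨ x = sSup (I b)}.Finite := by
  haveI hB : Finite B := finite_bar_type V hpwf hbars hiso
  have : {x : ℝ | ∃ b, x = sInf (I b) ∨ x = sSup (I b)} ⊆
      (Set.range fun b => sInf (I b)) ∪ (Set.range fun b => sSup (I b)) := by
    rintro x ⟨b, hx | hx⟩
    · exact Or.inl ⟨b, hx.symm⟩
    · exact Or.inr ⟨b, hx.symm⟩
  exact ((Set.finite_range _).union (Set.finite_range _)).subset this

end Finiteness

section CutPartition

variable {Q : AtR}

/-- The partition of the circle determined by a `2π`-periodic strictly monotone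
sequence of cut points: parts are the cut points and the open intervals between
consecutive cut points. -/
def cutPartition (Q : AtR) (K : ℕ) (hK : 0 < K) (c : ℤ → ℝ) (hmono : StrictMono c)
    (hper : ∀ i : ℤ, c (i + K) = c i + 2 * Real.pi) : CircPartition Q where
  N := 2 * K
  hN := by omega
  J j := if Even j then {c (j / 2)} else Set.Ioo (c (j / 2)) (c (j / 2 + 1))
  nonempty j := by
    split_ifs with h
    · exact ⟨_, rfl⟩
    · exact Set.nonempty_Ioo.mpr (hmono (by omega))
  ordconn j := by
    split_ifs with h
    · exact Set.ordConnected_singleton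
    · exact Set.ordConnected_Ioo
  ordered := by
    intro j j' hjj x hx y hy
    have hb1 : c (j / 2) ≤ x ∧ x < c (j / 2 + 1) := by
      split_ifs at hx with h
      · rw [Set.mem_singleton_iff] at hx
        refine ⟨hx.ge, ?_⟩
        rw [hx]
        exact hmono (by omega)
      · exact ⟨hx.1.le, hx.2⟩
    have hb2 : c (j' / 2) ≤ y := by
      split_ifs at hy with h
      · rw [Set.mem_singleton_iff] at hy
        exact hy.ge
      · exact hy.1.le
    by_cases hq : j / 2 = j' / 2
    · have hje : Even j ∧ ¬ Even j' ∧ j' = j + 1 := by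
        rw [Int.even_iff, Int.even_iff]
        omega
      rw [if_pos hje.1, Set.mem_singleton_iff] at hx
      rw [if_neg hje.2.1] at hy
      rw [hx, hq]
      exact hy.1
    · have hlt : j / 2 + 1 ≤ j' / 2 := by omega
      calc x < c (j / 2 + 1) := hb1.2
        _ ≤ c (j' / 2) := hmono.monotone hlt
        _ ≤ y := hb2
  cover := by
    intro θ
    obtain ⟨i, h1, h2⟩ := cut_exists_Ico hK c hmono hper θ
    rcases eq_or_lt_of_le h1 with he | hlt
    · refine ⟨2 * i, ?_⟩
      have e1 : (2 * i) / 2 = i := by omega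
      rw [if_pos (even_two_mul i), e1, Set.mem_singleton_iff]
      exact he.symm
    · refine ⟨2 * i + 1, ?_⟩
      have hodd : ¬ Even (2 * i + 1) := by rw [Int.even_iff]; omega
      have e1 : (2 * i + 1) / 2 = i := by omega
      rw [if_neg hodd, e1]
      exact ⟨hlt, h2⟩
  jper := by
    intro j θ
    have hpar : Even (j + ((2 * K : ℕ) : ℤ)) ↔ Even j := by
      rw [show ((2 * K : ℕ) : ℤ) = 2 * (K : ℤ) by push_cast; ring, Int.even_add]
      simp [Int.even_mul]
    have hdiv : (j + ((2 * K : ℕ) : ℤ)) / 2 = j / 2 + K := by omega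
    by_cases h : Even j
    · rw [if_pos h, if_pos (hpar.mpr h), hdiv, Set.mem_singleton_iff, Set.mem_singleton_iff,
        hper (j / 2)]
      constructor <;> intro hh <;> linarith
    · rw [if_neg h, if_neg (fun hc => h (hpar.mp hc)), hdiv,
        show j / 2 + (K:ℤ) + 1 = (j / 2 + 1) + K by ring, hper (j / 2), hper (j / 2 + 1)]
      constructor
      · rintro ⟨a, b⟩; exact ⟨by linarith, by linarith⟩
      · rintro ⟨a, b⟩; exact ⟨by linarith, by linarith⟩

lemma cutPartition_J (K : ℕ) (hK : 0 < K) (c : ℤ → ℝ) (hmono : StrictMono c)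
    (hper : ∀ i : ℤ, c (i + K) = c i + 2 * Real.pi) (j : ℤ) :
    (cutPartition Q K hK c hmono hper).J j
      = if Even j then {c (j / 2)} else Set.Ioo (c (j / 2)) (c (j / 2 + 1)) := rfl

lemma cutPartition_N (K : ℕ) (hK : 0 < K) (c : ℤ → ℝ) (hmono : StrictMono c)
    (hper : ∀ i : ℤ, c (i + K) = c i + 2 * Real.pi) :
    (cutPartition Q K hK c hmono hper).N = 2 * K := rfl

/-- Representative points: the cut point for singleton parts, the midpoint for open
interval parts. -/
def cutPt (c : ℤ → ℝ) : ℤ → ℝ := fun j =>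
  if Even j then c (j / 2) else (c (j / 2) + c (j / 2 + 1)) / 2

lemma cutPt_mem (K : ℕ) (hK : 0 < K) (c : ℤ → ℝ) (hmono : StrictMono c)
    (hper : ∀ i : ℤ, c (i + K) = c i + 2 * Real.pi) (j : ℤ) :
    cutPt c j ∈ (cutPartition Q K hK c hmono hper).J j := by
  rw [cutPartition_J]
  unfold cutPt
  split_ifs with h
  · rfl
  · have := hmono (show j / 2 < j / 2 + 1 by omega)
    exact ⟨by linarith, by linarith⟩

lemma cutPt_per (K : ℕ) (c : ℤ → ℝ)
    (hper : ∀ i : ℤ, c (i + K) = c i + 2 * Real.pi) (j : ℤ) :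
    cutPt c (j + ((2 * K : ℕ) : ℤ)) = cutPt c j + 2 * Real.pi := by
  unfold cutPt
  have hpar : Even (j + ((2 * K : ℕ) : ℤ)) ↔ Even j := by
    rw [show ((2 * K : ℕ) : ℤ) = 2 * (K : ℤ) by push_cast; ring, Int.even_add]
    simp [Int.even_mul]
  have hdiv : (j + ((2 * K : ℕ) : ℤ)) / 2 = j / 2 + K := by omega
  by_cases h : Even j
  · rw [if_pos h, if_pos (hpar.mpr h), hdiv, hper (j / 2)]
  · rw [if_neg h, if_neg (fun hc => h (hpar.mp hc)), hdiv,
      show j / 2 + (K:ℤ) + 1 = (j / 2 + 1) + K by ring, hper (j / 2), hper (j / 2 + 1)]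
    ring

end CutPartition

namespace SRep

section Refine

variable {k : Type} [Field k] {Q : AtR}

lemma castO_rfl (V : SRep k Q) (θ : ℝ) (v : V.obj θ) : V.castO rfl v = v := rfl

lemma map_square (V : SRep k Q) {a b x y : ℝ} (h1 : Q.covRel a x) (h2 : Q.covRel x y)
    (h3 : Q.covRel a b) (h4 : Q.covRel b y) (h5 : Q.covRel a y) (v : V.obj a) :
    V.map h2 (V.map h1 v) = V.map h4 (V.map h3 v) := by
  rw [← LinearMap.comp_apply, ← V.map_comp h1 h2 h5, ← LinearMap.comp_apply,
    ← V.map_comp h3 h4 h5]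

lemma partIdx_pt (C : CircPartition Q) (pt : ℤ → ℝ) (hmem : ∀ j, pt j ∈ C.J j) (j : ℤ) :
    C.partIdx (pt j) = j := C.partIdx_eq (hmem j)

lemma partIdx_mono (C : CircPartition Q) {θ φ : ℝ} (h : θ ≤ φ) :
    C.partIdx θ ≤ C.partIdx φ := by
  by_contra hc
  push_neg at hc
  exact absurd (C.ordered hc _ (C.mem_partIdx φ) _ (C.mem_partIdx θ)) (not_lt.mpr h)

lemma pt_mono (C : CircPartition Q) (pt : ℤ → ℝ) (hmem : ∀ j, pt j ∈ C.J j)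
    {j j' : ℤ} (h : j ≤ j') : pt j ≤ pt j' := by
  rcases eq_or_lt_of_le h with he | hlt
  · rw [he]
  · exact (C.ordered hlt _ (hmem j) _ (hmem j')).le

lemma ptCov (C : CircPartition Q) (pt : ℤ → ℝ) (hmem : ∀ j, pt j ∈ C.J j)
    (harc : ∀ {θ : ℝ} {j : ℤ}, θ ∈ Set.Icc (Q.α j) (Q.α (j + 1)) →
      C.J (C.partIdx θ) ⊆ Set.Icc (Q.α j) (Q.α (j + 1)))
    {θ φ : ℝ} (h : Q.covRel θ φ) :
    Q.covRel (pt (C.partIdx θ)) (pt (C.partIdx φ)) := by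
  unfold AtR.covRel at h ⊢
  by_cases hm : Q.m = 0
  · rw [if_pos hm] at h ⊢
    exact pt_mono C pt hmem (partIdx_mono C h)
  · rw [if_neg hm] at h ⊢
    obtain ⟨j, hθ, hφ, hp⟩ := h
    have hptθ : pt (C.partIdx θ) ∈ Set.Icc (Q.α j) (Q.α (j + 1)) := (harc hθ) (hmem _)
    have hptφ : pt (C.partIdx φ) ∈ Set.Icc (Q.α j) (Q.α (j + 1)) := (harc hφ) (hmem _)
    refine ⟨j, hptθ, hptφ, ?_⟩
    rcases hp with ⟨he, hle⟩ | ⟨ho, hle⟩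
    · exact Or.inl ⟨he, pt_mono C pt hmem (partIdx_mono C hle)⟩
    · exact Or.inr ⟨ho, pt_mono C pt hmem (partIdx_mono C hle)⟩

lemma covRel_tot (C : CircPartition Q) (pt : ℤ → ℝ)
    (harc : ∀ {θ : ℝ} {j : ℤ}, θ ∈ Set.Icc (Q.α j) (Q.α (j + 1)) →
      C.J (C.partIdx θ) ⊆ Set.Icc (Q.α j) (Q.α (j + 1)))
    {x y : ℝ} (hp : C.partIdx x = C.partIdx y) :
    Q.covRel x y ∨ Q.covRel y x := by
  obtain ⟨j, hj⟩ := AtR.mem_arc (Q := Q) x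
  have hy : y ∈ Set.Icc (Q.α j) (Q.α (j + 1)) := (harc hj) (by
    have h2 := C.mem_partIdx y
    rw [← hp] at h2
    exact h2)
  rcases Q.dirLE_total j x y with hd | hd
  · exact Or.inl (AtR.covRel_of_dirLE hj hy hd)
  · exact Or.inr (AtR.covRel_of_dirLE hy hj hd)

lemma compL (C : CircPartition Q) (pt : ℤ → ℝ) (hmem : ∀ j, pt j ∈ C.J j)
    (harc : ∀ {θ : ℝ} {j : ℤ}, θ ∈ Set.Icc (Q.α j) (Q.α (j + 1)) →
      C.J (C.partIdx θ) ⊆ Set.Icc (Q.α j) (Q.α (j + 1)))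
    {θ φ : ℝ} (h : Q.covRel θ φ) (h1 : Q.covRel (pt (C.partIdx θ)) θ) :
    Q.covRel (pt (C.partIdx θ)) φ := by
  by_cases hm : Q.m = 0
  · unfold AtR.covRel at *
    rw [if_pos hm] at *
    linarith
  · have h' := h
    unfold AtR.covRel at h'
    rw [if_neg hm] at h'
    obtain ⟨j, hθ, hφ, hp⟩ := h'
    have hptθ : pt (C.partIdx θ) ∈ Set.Icc (Q.α j) (Q.α (j + 1)) := (harc hθ) (hmem _)
    have d1 := AtR.dirLE_of_covRel h1 hptθ hθ
    have d2 : Q.dirLE j θ φ := AtR.dirLE_of_covRel h hθ hφ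
    exact AtR.covRel_of_dirLE hptθ hφ (AtR.dirLE_trans d1 d2)

lemma compM (C : CircPartition Q) (pt : ℤ → ℝ) (hmem : ∀ j, pt j ∈ C.J j)
    (harc : ∀ {θ : ℝ} {j : ℤ}, θ ∈ Set.Icc (Q.α j) (Q.α (j + 1)) →
      C.J (C.partIdx θ) ⊆ Set.Icc (Q.α j) (Q.α (j + 1)))
    {θ φ : ℝ} (h : Q.covRel θ φ) (h1 : Q.covRel θ (pt (C.partIdx θ))) :
    Q.covRel θ (pt (C.partIdx φ)) := by
  by_cases hm : Q.m = 0
  · have h2 := ptCov C pt hmem harc h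
    unfold AtR.covRel at *
    rw [if_pos hm] at *
    linarith
  · have h' := h
    unfold AtR.covRel at h'
    rw [if_neg hm] at h'
    obtain ⟨j, hθ, hφ, hp⟩ := h'
    have hptθ : pt (C.partIdx θ) ∈ Set.Icc (Q.α j) (Q.α (j + 1)) := (harc hθ) (hmem _)
    have hptφ : pt (C.partIdx φ) ∈ Set.Icc (Q.α j) (Q.α (j + 1)) := (harc hφ) (hmem _)
    have d1 := AtR.dirLE_of_covRel h1 hθ hptθ
    have d2 := AtR.dirLE_of_covRel (ptCov C pt hmem harc h) hptθ hptφ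
    exact AtR.covRel_of_dirLE hθ hptφ (AtR.dirLE_trans d1 d2)

/-- The refinement representation `U`. -/
def refineRep (V : SRep k Q) (C : CircPartition Q) (pt : ℤ → ℝ)
    (hper' : ∀ j : ℤ, pt (j + (C.N : ℤ)) = pt j + 2 * Real.pi)
    (hmem : ∀ j, pt j ∈ C.J j)
    (harc : ∀ {θ : ℝ} {j : ℤ}, θ ∈ Set.Icc (Q.α j) (Q.α (j + 1)) →
      C.J (C.partIdx θ) ⊆ Set.Icc (Q.α j) (Q.α (j + 1))) : SRep k Q where
  obj θ := V.obj (pt (C.partIdx θ))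
  map h := V.map (ptCov C pt hmem harc h)
  map_id θ h := V.map_id _ _
  map_comp h1 h2 h3 := V.map_comp _ _ _
  per θ := (V.castO (show pt (C.partIdx (θ + 2 * Real.pi)) = pt (C.partIdx θ) + 2 * Real.pi by
      rw [C.partIdx_shift θ]; exact hper' _)).trans (V.per (pt (C.partIdx θ)))
  per_map {θ φ} h h' := by
    apply LinearMap.ext
    intro v
    simp only [LinearMap.comp_apply, LinearEquiv.coe_coe, LinearEquiv.trans_apply]
    have eθ : pt (C.partIdx (θ + 2 * Real.pi)) = pt (C.partIdx θ) + 2 * Real.pi := by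
      rw [C.partIdx_shift θ]; exact hper' _
    have eφ : pt (C.partIdx (φ + 2 * Real.pi)) = pt (C.partIdx φ) + 2 * Real.pi := by
      rw [C.partIdx_shift φ]; exact hper' _
    have hS : Q.covRel (pt (C.partIdx θ) + 2 * Real.pi) (pt (C.partIdx φ) + 2 * Real.pi) :=
      AtR.covRel_shift.mpr (ptCov C pt hmem harc h)
    rw [V.per_map_apply (ptCov C pt hmem harc h) hS (V.castO eθ v)]
    congr 1
    exact V.map_castO eθ eφ (ptCov C pt hmem harc h') hS v

open Classical in
/-- The comparison isomorphism from the refinement back to `V`. -/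
noncomputable def backEquiv (V : SRep k Q) (C : CircPartition Q) (pt : ℤ → ℝ)
    (hmem : ∀ j, pt j ∈ C.J j)
    (harc : ∀ {θ : ℝ} {j : ℤ}, θ ∈ Set.Icc (Q.α j) (Q.α (j + 1)) →
      C.J (C.partIdx θ) ⊆ Set.Icc (Q.α j) (Q.α (j + 1)))
    (hbij : ∀ ⦃θ φ : ℝ⦄ (h : Q.covRel θ φ), C.partIdx θ = C.partIdx φ →
      Function.Bijective (V.map h)) (θ : ℝ) :
    V.obj (pt (C.partIdx θ)) ≃ₗ[k] V.obj θ :=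
  if h : Q.covRel (pt (C.partIdx θ)) θ then
    LinearEquiv.ofBijective _ (hbij h (by rw [partIdx_pt C pt hmem]))
  else
    (LinearEquiv.ofBijective
      (V.map ((covRel_tot C pt harc (by rw [partIdx_pt C pt hmem])).resolve_left h))
      (hbij _ (by rw [partIdx_pt C pt hmem]))).symm

end Refine

end SRep

namespace SRep

section Back

variable {k : Type} [Field k] {Q : AtR}

lemma map_comp_apply (V : SRep k Q) {a b c : ℝ} (h1 : Q.covRel a b) (h2 : Q.covRel b c)
    (h3 : Q.covRel a c) (v : V.obj a) : V.map h2 (V.map h1 v) = V.map h3 v := by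
  rw [V.map_comp h1 h2 h3]
  rfl

variable (V : SRep k Q) (C : CircPartition Q) (pt : ℤ → ℝ)
  (hmem : ∀ j, pt j ∈ C.J j)
  (harc : ∀ {θ : ℝ} {j : ℤ}, θ ∈ Set.Icc (Q.α j) (Q.α (j + 1)) →
    C.J (C.partIdx θ) ⊆ Set.Icc (Q.α j) (Q.α (j + 1)))
  (hbij : ∀ ⦃θ φ : ℝ⦄ (h : Q.covRel θ φ), C.partIdx θ = C.partIdx φ →
    Function.Bijective (V.map h))

lemma back_natural {θ φ : ℝ} (h : Q.covRel θ φ) (v : V.obj (pt (C.partIdx θ))) :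
    backEquiv V C pt hmem harc hbij φ (V.map (ptCov C pt hmem harc h) v)
      = V.map h (backEquiv V C pt hmem harc hbij θ v) := by
  unfold backEquiv
  by_cases h1 : Q.covRel (pt (C.partIdx θ)) θ <;>
    by_cases h2 : Q.covRel (pt (C.partIdx φ)) φ
  · rw [dif_pos h1, dif_pos h2]
    simp only [LinearEquiv.ofBijective_apply]
    exact V.map_square (ptCov C pt hmem harc h) h2 h1 h (compL C pt hmem harc h h1) v
  · rw [dif_pos h1, dif_neg h2, LinearEquiv.symm_apply_eq]
    simp only [LinearEquiv.ofBijective_apply]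
    rw [V.map_comp_apply h1 h (compL C pt hmem harc h h1) v,
      V.map_comp_apply (compL C pt hmem harc h h1) _ (ptCov C pt hmem harc h) v]
  · rw [dif_neg h1, dif_pos h2]
    simp only [LinearEquiv.ofBijective_apply]
    have hv := (LinearEquiv.ofBijective
      (V.map ((covRel_tot C pt harc (by rw [partIdx_pt C pt hmem])).resolve_left h1))
      (hbij _ (by rw [partIdx_pt C pt hmem]))).apply_symm_apply v
    rw [LinearEquiv.ofBijective_apply] at hv
    conv_lhs => rw [← hv]
    rw [V.map_comp_apply _ (ptCov C pt hmem harc h)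
        (compM C pt hmem harc h ((covRel_tot C pt harc
          (by rw [partIdx_pt C pt hmem])).resolve_left h1)) _,
      V.map_comp_apply (compM C pt hmem harc h ((covRel_tot C pt harc
          (by rw [partIdx_pt C pt hmem])).resolve_left h1)) h2 h _]
  · rw [dif_neg h1, dif_neg h2, LinearEquiv.symm_apply_eq]
    simp only [LinearEquiv.ofBijective_apply]
    have hv := (LinearEquiv.ofBijective
      (V.map ((covRel_tot C pt harc (by rw [partIdx_pt C pt hmem])).resolve_left h1))
      (hbij _ (by rw [partIdx_pt C pt hmem]))).apply_symm_apply v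
    rw [LinearEquiv.ofBijective_apply] at hv
    conv_lhs => rw [← hv]
    rw [V.map_comp_apply _ (ptCov C pt hmem harc h)
        (compM C pt hmem harc h ((covRel_tot C pt harc
          (by rw [partIdx_pt C pt hmem])).resolve_left h1)) _,
      V.map_comp_apply h _ (compM C pt hmem harc h ((covRel_tot C pt harc
          (by rw [partIdx_pt C pt hmem])).resolve_left h1)) _]

lemma back_per (hper' : ∀ j : ℤ, pt (j + (C.N : ℤ)) = pt j + 2 * Real.pi) (θ : ℝ)
    (v : V.obj (pt (C.partIdx (θ + 2 * Real.pi)))) :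
    backEquiv V C pt hmem harc hbij θ
        ((refineRep V C pt hper' hmem harc).per θ v)
      = V.per θ (backEquiv V C pt hmem harc hbij (θ + 2 * Real.pi) v) := by
  have eθ : pt (C.partIdx (θ + 2 * Real.pi)) = pt (C.partIdx θ) + 2 * Real.pi := by
    rw [C.partIdx_shift θ]; exact hper' _
  have hcond : Q.covRel (pt (C.partIdx (θ + 2 * Real.pi))) (θ + 2 * Real.pi)
      ↔ Q.covRel (pt (C.partIdx θ)) θ := by
    rw [eθ]
    exact AtR.covRel_shift
  have hUper : (refineRep V C pt hper' hmem harc).per θ v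
      = V.per (pt (C.partIdx θ)) (V.castO eθ v) := rfl
  rw [hUper]
  unfold backEquiv
  by_cases h1 : Q.covRel (pt (C.partIdx θ)) θ
  · rw [dif_pos h1, dif_pos (hcond.mpr h1)]
    simp only [LinearEquiv.ofBijective_apply]
    have hS : Q.covRel (pt (C.partIdx θ) + 2 * Real.pi) (θ + 2 * Real.pi) :=
      AtR.covRel_shift.mpr h1
    rw [V.per_map_apply h1 hS (V.castO eθ v)]
    congr 1
    exact V.map_castO eθ rfl (hcond.mpr h1) hS v
  · rw [dif_neg h1, dif_neg (fun hc => h1 (hcond.mp hc)), LinearEquiv.symm_apply_eq]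
    simp only [LinearEquiv.ofBijective_apply]
    set hb : Q.covRel θ (pt (C.partIdx θ)) :=
      (covRel_tot C pt harc (by rw [partIdx_pt C pt hmem])).resolve_left h1 with hbdef
    have hv := (LinearEquiv.ofBijective
      (V.map ((covRel_tot C pt harc
        (by rw [partIdx_pt C pt hmem])).resolve_left (fun hc => h1 (hcond.mp hc))))
      (hbij _ (by rw [partIdx_pt C pt hmem]))).apply_symm_apply v
    rw [LinearEquiv.ofBijective_apply] at hv
    conv_lhs => rw [← hv]
    have hbS : Q.covRel (θ + 2 * Real.pi) (pt (C.partIdx θ) + 2 * Real.pi) :=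
      AtR.covRel_shift.mpr hb
    rw [V.per_map_apply hb hbS]
    congr 1
    have := V.map_castO (a := θ + 2 * Real.pi) rfl eθ
      ((covRel_tot C pt harc
        (by rw [partIdx_pt C pt hmem])).resolve_left (fun hc => h1 (hcond.mp hc))) hbS
    rw [← this]
    rfl

lemma refine_refinementOf (hper' : ∀ j : ℤ, pt (j + (C.N : ℤ)) = pt j + 2 * Real.pi) :
    RefinementOf V C pt hper' (refineRep V C pt hper' hmem harc) := by
  refine ⟨hmem, fun θ => LinearEquiv.refl k _, ?_, ?_, ?_⟩
  · intro θ φ h hp v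
    simp only [LinearEquiv.refl_apply]
    exact V.map_eq_castO (congrArg pt hp) (ptCov C pt hmem harc h) v
  · intro θ φ h hc v
    simp only [LinearEquiv.refl_apply]
    rfl
  · intro θ v
    simp only [LinearEquiv.refl_apply]
    rfl

include hbij in
lemma refine_repIso (hper' : ∀ j : ℤ, pt (j + (C.N : ℤ)) = pt j + 2 * Real.pi) :
    RepIso (refineRep V C pt hper' hmem harc) V := by
  refine ⟨backEquiv V C pt hmem harc hbij, ?_, ?_⟩
  · intro θ φ h v
    exact back_natural V C pt hmem harc hbij h v
  · intro θ v
    exact back_per V C pt hmem harc hbij hper' θ v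

end Back

end SRep

/-- A finitistic representation `V` admits a finite partition of the circle into
path-connected parts with representative points such that (a) `V` maps within a
part are isomorphisms and (b) the associated refinement of `V` is isomorphic
to `V`. -/
theorem refinement_exists {k : Type} [Field k] {Q : AtR} (V : SRep k Q)
    (hfin : SRep.Finitistic V) :
    ∃ (C : CircPartition Q) (pt : ℤ → ℝ)
      (hper : ∀ j : ℤ, pt (j + (C.N : ℤ)) = pt j + 2 * Real.pi),
      (∀ j, pt j ∈ C.J j) ∧
      (∀ {θ φ : ℝ} (h : Q.covRel θ φ), C.partIdx θ = C.partIdx φ →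
        Function.Bijective (V.map h)) ∧
      ∃ U : SRep k Q, SRep.RefinementOf V C pt hper U ∧ SRep.RepIso U V := by
  classical
  obtain ⟨hpwf, hfin2⟩ := hfin
  choose B Wb I hbars hiso using hfin2
  set P : ℕ := Q.periodN with hPdef
  have hP2 : 2 ≤ P := AtR.two_le_periodN
  have hαP : Q.α (P : ℤ) = Q.α 0 + 2 * Real.pi := Q.α_periodN
  have h2π := two_pi_pos'
  -- the set of bar endpoints in the open arc `n`
  set E : ℤ → Set ℝ := fun n => {x | x ∈ Set.Ioo (Q.α n) (Q.α (n + 1)) ∧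
    ∃ b, x = sInf (I n b) ∨ x = sSup (I n b)} with hEdef
  have hEfin : ∀ n, (E n).Finite := fun n =>
    Set.Finite.subset (finite_bar_ends V hpwf (hbars n) (hiso n)) (fun x hx => hx.2)
  -- the cut set, inside the fundamental window
  set Wset : Set ℝ := (⋃ n ∈ Finset.Icc (0 : ℤ) ((P : ℤ) - 1), insert (Q.α n) (E n))
    with hWdef
  have hWfin : Wset.Finite :=
    Set.Finite.biUnion (Finset.Icc (0 : ℤ) ((P : ℤ) - 1)).finite_toSet
      (fun n _ => (hEfin n).insert _)
  have hαW : ∀ n : ℤ, 0 ≤ n → n ≤ (P : ℤ) - 1 → Q.α n ∈ Wset := by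
    intro n h0 h1
    exact Set.mem_biUnion (Finset.mem_Icc.mpr ⟨h0, h1⟩) (Set.mem_insert _ _)
  have hEW : ∀ n : ℤ, 0 ≤ n → n ≤ (P : ℤ) - 1 → E n ⊆ Wset := by
    intro n h0 h1 x hx
    exact Set.mem_biUnion (Finset.mem_Icc.mpr ⟨h0, h1⟩) (Set.mem_insert_of_mem _ hx)
  have hWsub : Wset ⊆ Set.Ico (Q.α 0) (Q.α 0 + 2 * Real.pi) := by
    intro x hx
    obtain ⟨n, hn, hx⟩ := Set.mem_iUnion₂.mp hx
    rw [Finset.mem_Icc] at hn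
    rcases Set.mem_insert_iff.mp hx with he | he
    · subst he
      constructor
      · exact Q.mono.monotone hn.1
      · rw [← hαP]
        exact Q.mono (by omega)
    · obtain ⟨⟨ha, hb⟩, -⟩ := he
      constructor
      · exact le_trans (Q.mono.monotone hn.1) ha.le
      · rw [← hαP]
        exact lt_of_lt_of_le hb (Q.mono.monotone (by omega))
  -- the sorted cut sequence
  set Fw : Finset ℝ := hWfin.toFinset with hFwdef
  have hα0Fw : Q.α 0 ∈ Fw := hWfin.mem_toFinset.mpr (hαW 0 le_rfl (by omega))
  set K : ℕ := Fw.card with hKdef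
  have hK : 0 < K := Finset.card_pos.mpr ⟨_, hα0Fw⟩
  set L : List ℝ := Fw.sort (· ≤ ·) with hLdef
  have hlen : L.length = K := Finset.length_sort _
  set c : ℤ → ℝ := fun i => L.getD (i % (K : ℤ)).toNat 0 + 2 * Real.pi * ((i / (K : ℤ) : ℤ) : ℝ)
    with hcdef
  have hKne : (K : ℤ) ≠ 0 := by omega
  have hKpos : (0 : ℤ) < (K : ℤ) := by omega
  have hmodlt : ∀ i : ℤ, (i % (K : ℤ)).toNat < L.length := by
    intro i
    have h1 := Int.emod_nonneg i hKne
    have h2 := Int.emod_lt_of_pos i hKpos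
    omega
  have hLW : ∀ z, z ∈ L → z ∈ Wset := by
    intro z hz
    rw [hLdef, Finset.mem_sort] at hz
    exact hWfin.mem_toFinset.mp hz
  have hgetW : ∀ i : ℤ, L.getD (i % (K : ℤ)).toNat 0 ∈ Wset := by
    intro i
    refine hLW _ ?_
    rw [List.getD_eq_getElem L 0 (hmodlt i)]
    exact List.getElem_mem (hmodlt i)
  have hgetIco : ∀ i : ℤ, L.getD (i % (K : ℤ)).toNat 0 ∈ Set.Ico (Q.α 0) (Q.α 0 + 2 * Real.pi) :=
    fun i => hWsub (hgetW i)
  have hsorted : L.Pairwise (· < ·) := List.sortedLT_iff_pairwise.mp (Finset.sortedLT_sort Fw)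
  have hmono : StrictMono c := by
    intro i j hij
    have hdivle : i / (K : ℤ) ≤ j / (K : ℤ) := Int.ediv_le_ediv hKpos hij.le
    rcases eq_or_lt_of_le hdivle with heq | hlt
    · -- same block: remainders increase
      have e1 := Int.mul_ediv_add_emod i (K : ℤ)
      have e2 := Int.mul_ediv_add_emod j (K : ℤ)
      rw [← heq] at e2
      have hrem : i % (K : ℤ) < j % (K : ℤ) := by linarith
      have hget : L.getD (i % (K : ℤ)).toNat 0 < L.getD (j % (K : ℤ)).toNat 0 := by
        rw [List.getD_eq_getElem L 0 (hmodlt i), List.getD_eq_getElem L 0 (hmodlt j)]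
        have := hsorted.rel_get_of_lt
          (a := ⟨(i % (K : ℤ)).toNat, hmodlt i⟩) (b := ⟨(j % (K : ℤ)).toNat, hmodlt j⟩)
          (by
            rw [Fin.mk_lt_mk]
            have h1 := Int.emod_nonneg i hKne
            omega)
        simpa [List.get_eq_getElem] using this
      rw [hcdef]
      dsimp only
      rw [← heq]
      linarith
    · have hb1 := hgetIco i
      have hb2 := hgetIco j
      have hcast : ((i / (K : ℤ) : ℤ) : ℝ) + 1 ≤ ((j / (K : ℤ) : ℤ) : ℝ) := by
        exact_mod_cast (by omega : i / (K : ℤ) + 1 ≤ j / (K : ℤ))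
      rw [hcdef]
      dsimp only
      nlinarith [hb1.1, hb1.2, hb2.1, hb2.2]
  have hcper : ∀ i : ℤ, c (i + (K : ℤ)) = c i + 2 * Real.pi := by
    intro i
    rw [hcdef]
    dsimp only
    rw [show i + (K : ℤ) = i + (K : ℤ) * 1 by ring, Int.add_mul_emod_self_left,
      Int.add_mul_ediv_left i 1 hKne]
    push_cast
    ring
  have hc3 : ∀ x ∈ Wset, ∃ l : ℤ, 0 ≤ l ∧ l < (K : ℤ) ∧ c l = x := by
    intro x hx
    have hxL : x ∈ L := by
      rw [hLdef, Finset.mem_sort]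
      exact hWfin.mem_toFinset.mpr hx
    obtain ⟨⟨ni, hni⟩, hget⟩ := List.mem_iff_get.mp hxL
    refine ⟨(ni : ℤ), by omega, by omega, ?_⟩
    have hmod : ((ni : ℤ) % (K : ℤ)) = (ni : ℤ) := Int.emod_eq_of_lt (by omega) (by omega)
    have hdiv : ((ni : ℤ) / (K : ℤ)) = 0 := Int.ediv_eq_zero_of_lt (by omega) (by omega)
    rw [hcdef]
    dsimp only
    rw [hmod, hdiv]
    push_cast
    rw [mul_zero, add_zero]
    rw [List.getD_eq_getElem L 0 (by omega)]
    rw [← hget]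
    simp [List.get_eq_getElem]
  have hc4 : ∀ n : ℤ, ∃ l : ℤ, c l = Q.α n := by
    intro n
    have hn0 : n % (P : ℤ) + (P : ℤ) * (n / (P : ℤ)) = n := by
      have := Int.mul_ediv_add_emod n (P : ℤ)
      omega
    have hα : Q.α n = Q.α (n % (P : ℤ)) + 2 * Real.pi * ((n / (P : ℤ) : ℤ) : ℝ) := by
      have := cut_per_mul Q.α (fun i => AtR.alpha_add_period i) (n % (P : ℤ)) (n / (P : ℤ))
      rw [hn0] at this
      exact this
    obtain ⟨l, -, -, hl⟩ := hc3 (Q.α (n % (P : ℤ)))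
      (hαW _ (Int.emod_nonneg n (by omega)) (by
        have := Int.emod_lt_of_pos n (show (0:ℤ) < (P : ℤ) by omega)
        omega))
    refine ⟨l + (K : ℤ) * (n / (P : ℤ)), ?_⟩
    rw [cut_per_mul c hcper l (n / (P : ℤ)), hl, hα]
  have hc6 : ∀ x ∈ Wset, ∀ i : ℤ, ¬ (c i < x ∧ x < c (i + 1)) := by
    rintro x hx i ⟨h1, h2⟩
    obtain ⟨l, -, -, hl⟩ := hc3 x hx
    rw [← hl] at h1 h2
    have ha : i < l := hmono.lt_iff_lt.mp h1
    have hb : l < i + 1 := hmono.lt_iff_lt.mp h2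
    omega
  -- the partition
  set C : CircPartition Q := cutPartition Q K hK c hmono hcper with hCdef
  have hNC : C.N = 2 * K := rfl
  have hper_pt : ∀ j : ℤ, cutPt c (j + (C.N : ℤ)) = cutPt c j + 2 * Real.pi := by
    intro j
    rw [show (C.N : ℤ) = ((2 * K : ℕ) : ℤ) from rfl]
    exact cutPt_per K c hcper j
  have hmem_pt : ∀ j, cutPt c j ∈ C.J j := fun j => cutPt_mem K hK c hmono hcper j
  -- every part is contained in any arc containing one of its points
  have harc : ∀ {θ : ℝ} {j : ℤ}, θ ∈ Set.Icc (Q.α j) (Q.α (j + 1)) →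
      C.J (C.partIdx θ) ⊆ Set.Icc (Q.α j) (Q.α (j + 1)) := by
    intro θ j hθ
    have hθJ : θ ∈ C.J (C.partIdx θ) := C.mem_partIdx θ
    rw [hCdef, cutPartition_J] at hθJ ⊢
    split_ifs at hθJ ⊢ with hev
    <;> rw [← hCdef] at hθJ ⊢
    · rw [Set.mem_singleton_iff] at hθJ
      intro x hx
      rw [Set.mem_singleton_iff] at hx
      rw [hx, ← hθJ]
      exact hθ
    · rw [Set.mem_Icc] at hθ
      rw [Set.mem_Ioo] at hθJ
      obtain ⟨l1, hl1⟩ := hc4 j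
      obtain ⟨l2, hl2⟩ := hc4 (j + 1)
      have hlow : Q.α j ≤ c (C.partIdx θ / 2) := by
        by_contra hcon
        push_neg at hcon
        rw [← hl1] at hcon hθ
        have hgt : C.partIdx θ / 2 < l1 := hmono.lt_iff_lt.mp hcon
        have h9 : c (C.partIdx θ / 2 + 1) ≤ c l1 := hmono.monotone (by omega)
        exact absurd (lt_of_lt_of_le hθJ.2 (h9.trans hθ.1)) (lt_irrefl θ)
      have hhigh : c (C.partIdx θ / 2 + 1) ≤ Q.α (j + 1) := by
        by_contra hcon
        push_neg at hcon
        rw [← hl2] at hcon hθ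
        have hgt : l2 < C.partIdx θ / 2 + 1 := hmono.lt_iff_lt.mp hcon
        have h9 : c l2 ≤ c (C.partIdx θ / 2) := hmono.monotone (by omega)
        exact absurd (lt_of_le_of_lt (hθ.2.trans h9) hθJ.1) (lt_irrefl θ)
      intro x hx
      exact ⟨le_trans hlow hx.1.le, le_trans hx.2.le hhigh⟩
  -- bijectivity on window parts
  have hwin : ∀ i₀ : ℤ, 0 ≤ i₀ → i₀ < (K : ℤ) → ∀ {x y : ℝ},
      x ∈ Set.Ioo (c i₀) (c (i₀ + 1)) → y ∈ Set.Ioo (c i₀) (c (i₀ + 1)) →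
      ∀ (h : Q.covRel x y), Function.Bijective (V.map h) := by
    intro i₀ hi0 hiK x y hx hy h
    obtain ⟨n, hn1, hn2⟩ := cut_exists_Ico Q.periodN_pos Q.α Q.mono
      (fun i => AtR.alpha_add_period i) (c i₀)
    have hciw : c i₀ ∈ Set.Ico (Q.α 0) (Q.α 0 + 2 * Real.pi) := by
      have hdiv : i₀ / (K : ℤ) = 0 := Int.ediv_eq_zero_of_lt hi0 hiK
      have := hgetIco i₀
      rw [hcdef]
      dsimp only
      rw [hdiv]
      push_cast
      rw [mul_zero, add_zero]
      exact this
    have hn0 : 0 ≤ n := by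
      by_contra hcon
      push_neg at hcon
      have : Q.α (n + 1) ≤ Q.α 0 := Q.mono.monotone (by omega)
      linarith [hciw.1]
    have hnP : n ≤ (P : ℤ) - 1 := by
      by_contra hcon
      push_neg at hcon
      have : Q.α (P : ℤ) ≤ Q.α n := Q.mono.monotone (by omega)
      rw [hαP] at this
      linarith [hciw.2]
    have hupper : c (i₀ + 1) ≤ Q.α (n + 1) := by
      obtain ⟨l2, hl2⟩ := hc4 (n + 1)
      rw [← hl2] at hn2 ⊢
      have : i₀ < l2 := hmono.lt_iff_lt.mp hn2
      exact hmono.monotone (by omega)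
    have hsub : Set.Ioo (c i₀) (c (i₀ + 1)) ⊆ Set.Icc (Q.α n) (Q.α (n + 1)) := by
      intro z hz
      exact ⟨le_trans hn1 hz.1.le, le_trans hz.2.le hupper⟩
    have hsubo : Set.Ioo (c i₀) (c (i₀ + 1)) ⊆ Set.Ioo (Q.α n) (Q.α (n + 1)) := by
      intro z hz
      exact ⟨lt_of_le_of_lt hn1 hz.1, lt_of_lt_of_le hz.2 hupper⟩
    have hag : ∀ b, ∀ u w : ℝ, u ∈ Set.Ioo (c i₀) (c (i₀ + 1)) →
        w ∈ Set.Ioo (c i₀) (c (i₀ + 1)) → u ∈ I n b → w ∈ I n b := by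
      intro b u w hu hw huI
      by_contra hwI
      have hIsub : I n b ⊆ Set.Icc (Q.α n) (Q.α (n + 1)) := (hbars n b).2.1
      have hoc : (I n b).OrdConnected := (hbars n b).1.2.2.1
      rcases lt_trichotomy u w with hlt | heq | hlt
      · have hbdd : BddAbove (I n b) := BddAbove.mono hIsub bddAbove_Icc
        have h1 : u ≤ sSup (I n b) := le_csSup hbdd huI
        have h2 : sSup (I n b) ≤ w := csSup_le ⟨u, huI⟩ (fun z hz => by
          by_contra hcz
          push_neg at hcz
          exact hwI (hoc.out huI hz ⟨hlt.le, hcz.le⟩))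
        have hgap : sSup (I n b) ∈ Set.Ioo (c i₀) (c (i₀ + 1)) :=
          ⟨lt_of_lt_of_le hu.1 h1, lt_of_le_of_lt h2 hw.2⟩
        have hE : sSup (I n b) ∈ E n := ⟨hsubo hgap, ⟨b, Or.inr rfl⟩⟩
        exact hc6 _ (hEW n hn0 hnP hE) i₀ ⟨hgap.1, hgap.2⟩
      · exact hwI (heq ▸ huI)
      · have hbdd : BddBelow (I n b) := BddBelow.mono hIsub bddBelow_Icc
        have h1 : sInf (I n b) ≤ u := csInf_le hbdd huI
        have h2 : w ≤ sInf (I n b) := le_csInf ⟨u, huI⟩ (fun z hz => by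
          by_contra hcz
          push_neg at hcz
          exact hwI (hoc.out hz huI ⟨hcz.le, hlt.le⟩))
        have hgap : sInf (I n b) ∈ Set.Ioo (c i₀) (c (i₀ + 1)) :=
          ⟨lt_of_lt_of_le hw.1 h2, lt_of_le_of_lt h1 hu.2⟩
        have hE : sInf (I n b) ∈ E n := ⟨hsubo hgap, ⟨b, Or.inl rfl⟩⟩
        exact hc6 _ (hEW n hn0 hnP hE) i₀ ⟨hgap.1, hgap.2⟩
    exact V.key_bij (hbars n) (hiso n) (hsub hx) (hsub hy)
      (fun b => ⟨fun hh => hag b x y hx hy hh, fun hh => hag b y x hy hx hh⟩) h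
  -- global bijectivity within parts
  have hbij : ∀ ⦃θ φ : ℝ⦄ (h : Q.covRel θ φ), C.partIdx θ = C.partIdx φ →
      Function.Bijective (V.map h) := by
    intro θ φ h hpeq
    have hθJ : θ ∈ C.J (C.partIdx θ) := C.mem_partIdx θ
    have hφJ : φ ∈ C.J (C.partIdx θ) := by
      have h2 := C.mem_partIdx φ
      rw [← hpeq] at h2
      exact h2
    rw [hCdef, cutPartition_J] at hθJ hφJ
    split_ifs at hθJ hφJ with hev
    <;> rw [← hCdef] at hθJ hφJ
    · rw [Set.mem_singleton_iff] at hθJ hφJ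
      have heq : θ = φ := hθJ.trans hφJ.symm
      subst heq
      rw [V.map_id θ h]
      exact Function.bijective_id
    · set i : ℤ := C.partIdx θ / 2 with hidef
      set t : ℤ := i / (K : ℤ) with htdef
      set i₀ : ℤ := i % (K : ℤ) with hi0def
      have hid : i = i₀ + (K : ℤ) * t := by
        have := Int.mul_ediv_add_emod i (K : ℤ)
        rw [hi0def, htdef]
        omega
      have hci : c i = c i₀ + 2 * Real.pi * (t : ℝ) := by
        have h2 := cut_per_mul c hcper i₀ t
        rw [← hid] at h2
        exact h2
      have hci1 : c (i + 1) = c (i₀ + 1) + 2 * Real.pi * (t : ℝ) := by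
        have h2 := cut_per_mul c hcper (i₀ + 1) t
        rw [show i₀ + 1 + (K : ℤ) * t = (i₀ + (K : ℤ) * t) + 1 by ring, ← hid] at h2
        exact h2
      have hθ' : θ - 2 * Real.pi * (t : ℝ) ∈ Set.Ioo (c i₀) (c (i₀ + 1)) := by
        constructor
        · have := hθJ.1; rw [hci] at this; linarith
        · have := hθJ.2; rw [hci1] at this; linarith
      have hφ' : φ - 2 * Real.pi * (t : ℝ) ∈ Set.Ioo (c i₀) (c (i₀ + 1)) := by
        constructor
        · have := hφJ.1; rw [hci] at this; linarith
        · have := hφJ.2; rw [hci1] at this; linarith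
      have h' : Q.covRel (θ - 2 * Real.pi * (t : ℝ)) (φ - 2 * Real.pi * (t : ℝ)) := by
        apply (AtR.covRel_shiftZ t).mp
        rw [show θ - 2 * Real.pi * (t : ℝ) + 2 * Real.pi * (t : ℝ) = θ by ring,
          show φ - 2 * Real.pi * (t : ℝ) + 2 * Real.pi * (t : ℝ) = φ by ring]
        exact h
      have hb' : Function.Bijective (V.map h') :=
        hwin i₀ (Int.emod_nonneg i hKne) (Int.emod_lt_of_pos i hKpos) hθ' hφ' h'
      have hS : Q.covRel (θ - 2 * Real.pi * (t : ℝ) + 2 * Real.pi * (t : ℝ))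
          (φ - 2 * Real.pi * (t : ℝ) + 2 * Real.pi * (t : ℝ)) := by
        rw [show θ - 2 * Real.pi * (t : ℝ) + 2 * Real.pi * (t : ℝ) = θ by ring,
          show φ - 2 * Real.pi * (t : ℝ) + 2 * Real.pi * (t : ℝ) = φ by ring]
        exact h
      exact (V.bij_congr (by ring) (by ring) hS h).mpr ((V.bij_shiftZ t h' hS).mpr hb')
  -- assemble
  refine ⟨C, cutPt c, hper_pt, hmem_pt, ?_, ?_⟩
  · intro θ φ h hp
    exact hbij h hp
  · exact ⟨SRep.refineRep V C (cutPt c) hper_pt hmem_pt harc,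
      SRep.refine_refinementOf V C (cutPt c) hmem_pt harc hper_pt,
      SRep.refine_repIso V C (cutPt c) hmem_pt harc hbij hper_pt⟩
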